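/- arXiv:math/0203014 — 4 statements merged into one kernel-verified Lean document; each statement's English description precedes it below -/
import Mathlib

section
/- Let G be a group acting by isometries on a 1-hyperbolic geodesic metric space (X,d) with base point x ∈ X, let M = (g_1, …, g_n) ∈ Gⁿ be a minimal n-tuple with |g_i|_x ≤ |g_n|_x for 1 ≤ i ≤ n−1, let H = ⟨g_1, …, g_{n−1}⟩, and suppose d_2 ≥ 0 is a constant such that every geodesic segment [x, hx] with h ∈ H is contained in the a-neighborhood of the orbit Hx, where a = max_{1≤i≤n−1}(|g_i|_x/2 + d_2). Let N ≥ 1 be an integer. Then either ‖g_n‖ < 2N + 2d_2 + 5, or there exists a point r ∈ X and geodesic segments such that the path w = [x,r] ∪ [r, g_n²x] has length at most |g_n²|_x + 2 and lies in the 2-neighborhood of any geodesic segment [x, g_n²x], the segment [x,r] lies in the 2-neighborhood of [x, g_n x], the segment [r, g_n²x] lies in the 2-neighborhood of g_n[x, g_n x], and d(x,r) ≥ |g_n|_x/2 + N + d_2 and d(r, g_n²x) ≥ |g_n|_x/2 + N + d_2. -/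
set_option linter.unusedVariables false

/-- A geodesic segment from `a` to `b`: the image of an isometric
parameterization of the interval `[0, dist a b]`. -/
def IsGeodesicSegment {X : Type*} [MetricSpace X] (s : Set X) (a b : X) : Prop :=
  ∃ f : ℝ → X, f 0 = a ∧ f (dist a b) = b ∧
    (∀ t₁ ∈ Set.Icc (0 : ℝ) (dist a b), ∀ t₂ ∈ Set.Icc (0 : ℝ) (dist a b),
      dist (f t₁) (f t₂) = |t₁ - t₂|) ∧
    s = f '' Set.Icc (0 : ℝ) (dist a b)

/-- A geodesic metric space: any two points are joined by a geodesic segment. -/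
def GeodesicSpace (X : Type*) [MetricSpace X] : Prop :=
  ∀ a b : X, ∃ s : Set X, IsGeodesicSegment s a b

/-- `A` is contained in the `r`-neighborhood of `B`. -/
def InNbhd {X : Type*} [MetricSpace X] (A B : Set X) (r : ℝ) : Prop :=
  ∀ p ∈ A, ∃ q ∈ B, dist p q ≤ r

/-- `δ`-hyperbolicity: every geodesic triangle is `δ`-thin, i.e. each side is
contained in the `δ`-neighborhood of the union of the other two sides. -/
def DeltaHyperbolic (X : Type*) [MetricSpace X] (δ : ℝ) : Prop :=
  ∀ a b c : X, ∀ sab sac sbc : Set X,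
    IsGeodesicSegment sab a b → IsGeodesicSegment sac a c → IsGeodesicSegment sbc b c →
    InNbhd sab (sac ∪ sbc) δ

/-- Elementary Nielsen moves on an `n`-tuple of elements of a group. -/
inductive NielsenMove {G : Type*} [Group G] {n : ℕ} : (Fin n → G) → (Fin n → G) → Prop
  | inv (g : Fin n → G) (i : Fin n) : NielsenMove g (Function.update g i (g i)⁻¹)
  | mul (g : Fin n → G) (i j : Fin n) (hij : i ≠ j) :
      NielsenMove g (Function.update g i (g i * g j))
  | swap (g : Fin n → G) (i j : Fin n) (hij : i ≠ j) :
      NielsenMove g (g ∘ Equiv.swap i j)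

/-- Nielsen equivalence: a finite chain of elementary Nielsen moves. -/
def NielsenEquiv {G : Type*} [Group G] {n : ℕ} (M M' : Fin n → G) : Prop :=
  Relation.ReflTransGen NielsenMove M M'

/-- The word metric on the free group `F(x_1, …, x_n)`:
the length of the reduced word representing `w⁻¹ * v`. -/
noncomputable def freeDist {n : ℕ} (w v : FreeGroup (Fin n)) : ℝ :=
  ((w⁻¹ * v).toWord.length : ℝ)

/-- The orbit map (on the subgroup generated by the tuple `g`, identified with
a quotient of the free group via `FreeGroup.lift g`) is a quasi-isometric embedding
with respect to the word metric of the basis `g`. -/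
def OrbitQIEmbed {G X : Type*} [Group G] [MetricSpace X] [MulAction G X]
    {n : ℕ} (x : X) (g : Fin n → G) : Prop :=
  ∃ lam eps : ℝ, 1 ≤ lam ∧ 0 ≤ eps ∧ ∀ w v : FreeGroup (Fin n),
    lam⁻¹ * freeDist w v - eps ≤ dist ((FreeGroup.lift g w) • x) ((FreeGroup.lift g v) • x) ∧
    dist ((FreeGroup.lift g w) • x) ((FreeGroup.lift g v) • x) ≤ lam * freeDist w v + eps

/-- The sum of the displacements `|g_i|_x` of the members of a tuple. -/
noncomputable def tupleLen {G X : Type*} [Group G] [MetricSpace X] [MulAction G X]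
    {n : ℕ} (x : X) (M : Fin n → G) : ℝ :=
  ∑ i, dist x (M i • x)

/-- A minimal tuple: `|M|_x ≤ |M'|_x + 1` for every Nielsen-equivalent tuple `M'`. -/
def MinimalTuple {G X : Type*} [Group G] [MetricSpace X] [MulAction G X]
    {n : ℕ} (x : X) (M : Fin n → G) : Prop :=
  ∀ M' : Fin n → G, NielsenEquiv M M' → tupleLen x M ≤ tupleLen x M' + 1

/-- A freely reduced word in letters `(i, ±1)`: no letter is followed by its inverse. -/
def ReducedWord {n : ℕ} (l : List (Fin n × Bool)) : Prop :=
  l.Chain' fun a b => a.1 = b.1 → a.2 = b.2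

/-- The element of `G` represented by a word in the tuple `g` and its inverses. -/
def wordProd {G : Type*} [Group G] {n : ℕ} (g : Fin n → G) (l : List (Fin n × Bool)) : G :=
  (l.map fun p => if p.2 then g p.1 else (g p.1)⁻¹).prod

/-- Conclusion (2): for freely reduced `u = g_{i_1}^{ε_1} ⋯ g_{i_k}^{ε_k}`, any geodesic
`[x, ux]` lies in the `d`-neighborhood of the broken path
`[x, g_{i_1}^{ε_1} x] ∪ ⋯ ∪ g_{i_1}^{ε_1} ⋯ g_{i_{k-1}}^{ε_{k-1}} [x, g_{i_k}^{ε_k} x]`. -/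
def BrokenPathNbhd {G X : Type*} [Group G] [MetricSpace X] [MulAction G X]
    {n : ℕ} (x : X) (g : Fin n → G) (d : ℝ) : Prop :=
  ∀ l : List (Fin n × Bool), l ≠ [] → ReducedWord l →
    ∀ S : Set X, IsGeodesicSegment S x (wordProd g l • x) →
    ∀ seg : ℕ → Set X,
      (∀ j < l.length, IsGeodesicSegment (seg j)
        (wordProd g (l.take j) • x) (wordProd g (l.take (j + 1)) • x)) →
      ∀ p ∈ S, ∃ j < l.length, ∃ q ∈ seg j, dist p q ≤ d

/-- For freely reduced `u`, any geodesic `[x, ux]` lies in the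
`max_i (|g_i|_x/2 + d)`-neighborhood of the orbit `Ux`. -/
def SegInOrbitNbhd {G X : Type*} [Group G] [MetricSpace X] [MulAction G X]
    {n : ℕ} (x : X) (g : Fin n → G) (d : ℝ) : Prop :=
  ∀ l : List (Fin n × Bool), l ≠ [] → ReducedWord l →
    ∀ S : Set X, IsGeodesicSegment S x (wordProd g l • x) →
    ∀ p ∈ S, ∃ (w : FreeGroup (Fin n)) (i : Fin n),
      dist p ((FreeGroup.lift g w) • x) ≤ dist x (g i • x) / 2 + d

/-- Conclusion (3): for freely reduced `u = g_{i_1}^{ε_1} ⋯ g_{i_k}^{ε_k}` one has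
`|u|_x ≥ |g_{i_j}|_x - d` for every letter occurring in `u`. -/
def LetterBound {G X : Type*} [Group G] [MetricSpace X] [MulAction G X]
    {n : ℕ} (x : X) (g : Fin n → G) (d : ℝ) : Prop :=
  ∀ l : List (Fin n × Bool), ReducedWord l → ∀ j : Fin l.length,
    dist x (g (l.get j).1 • x) - d ≤ dist x (wordProd g l • x)

/-- Conclusion (4): every subsegment of a geodesic `[x, ux]`, `u ∈ U`, of length
greater than `d₄` meets the `max_i (|g_i|_x/2 - c)`-neighborhood of the orbit `Ux`. -/
def SubsegMeetsOrbit {G X : Type*} [Group G] [MetricSpace X] [MulAction G X]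
    {n : ℕ} (x : X) (g : Fin n → G) (d₄ c : ℝ) : Prop :=
  ∀ w : FreeGroup (Fin n), ∀ S : Set X, IsGeodesicSegment S x ((FreeGroup.lift g w) • x) →
    ∀ a ∈ S, ∀ b ∈ S, ∀ τ : Set X, IsGeodesicSegment τ a b → τ ⊆ S → d₄ < dist a b →
    ∃ p ∈ τ, ∃ (v : FreeGroup (Fin n)) (i : Fin n),
      dist p ((FreeGroup.lift g v) • x) ≤ dist x (g i • x) / 2 - c

/-- The dichotomy of Theorem 11 for an `(m+1)`-tuple `f` at base point `x`, with
constants `d₁, d₂, d₃, d₄` and parameter `c`. -/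
def Thm11Alt {G X : Type*} [Group G] [MetricSpace X] [MulAction G X]
    {m : ℕ} (x : X) (f : Fin (m + 1) → G) (d₁ d₂ d₃ d₄ c : ℝ) : Prop :=
  (∃ f' : Fin (m + 1) → G, NielsenEquiv f f' ∧ (⨅ y : X, dist y (f' 0 • y)) ≤ d₁) ∨
  (Function.Injective ⇑(FreeGroup.lift f) ∧ OrbitQIEmbed x f ∧ BrokenPathNbhd x f d₂ ∧
    SegInOrbitNbhd x f d₂ ∧ LetterBound x f d₃ ∧ SubsegMeetsOrbit x f d₄ c)

/-- A naturally parameterized `(λ, ε)`-quasigeodesic on the set `I ⊆ ℝ`. -/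
def IsQuasigeodesicOn {X : Type*} [MetricSpace X] (α : ℝ → X) (I : Set ℝ)
    (lam eps : ℝ) : Prop :=
  (∀ s ∈ I, ∀ t ∈ I, dist (α s) (α t) ≤ |s - t|) ∧
  (∀ s ∈ I, ∀ t ∈ I, |s - t| ≤ lam * dist (α s) (α t) + eps)

/-- A naturally parameterized `T`-local `(λ, ε)`-quasigeodesic on the set `I ⊆ ℝ`. -/
def IsLocalQuasigeodesicOn {X : Type*} [MetricSpace X] (α : ℝ → X) (I : Set ℝ)
    (T lam eps : ℝ) : Prop :=
  (∀ s ∈ I, ∀ t ∈ I, dist (α s) (α t) ≤ |s - t|) ∧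
  (∀ s ∈ I, ∀ t ∈ I, |s - t| ≤ T → |s - t| ≤ lam * dist (α s) (α t) + eps)

/-- The data provided by Lemma 15 for the pair `(g, h)`: a point `r` together with
geodesic segments `[x,r]`, `[r,gx]`, `[r,ghx]` such that the broken paths
`w_g = [x,r] ∪ [r,gx]`, `w_h = [gx,r] ∪ [r,ghx]`, `w_{gh} = [x,r] ∪ [r,ghx]` have
lengths at most `|g|_x + 2`, `|h|_x + 2`, `|gh|_x + 2` respectively and each lies in
the `2`-neighborhood of any geodesic segment joining its endpoints. -/
def Lemma15Data {G X : Type*} [Group G] [MetricSpace X] [MulAction G X]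
    (x : X) (g h : G) (r : X) (sxr srg srgh : Set X) : Prop :=
  IsGeodesicSegment sxr x r ∧ IsGeodesicSegment srg r (g • x) ∧
  IsGeodesicSegment srgh r ((g * h) • x) ∧
  dist x r + dist r (g • x) ≤ dist x (g • x) + 2 ∧
  dist (g • x) r + dist r ((g * h) • x) ≤ dist x (h • x) + 2 ∧
  dist x r + dist r ((g * h) • x) ≤ dist x ((g * h) • x) + 2 ∧
  (∀ S : Set X, IsGeodesicSegment S x (g • x) → InNbhd (sxr ∪ srg) S 2) ∧
  (∀ S : Set X, IsGeodesicSegment S (g • x) ((g * h) • x) → InNbhd (srg ∪ srgh) S 2) ∧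
  (∀ S : Set X, IsGeodesicSegment S x ((g * h) • x) → InNbhd (sxr ∪ srgh) S 2)

/-- Conclusion (4) of Proposition 13, for products
`w = h₁ gₙ^{ε₁} h₂ gₙ^{ε₂} ⋯ hₗ gₙ^{εₗ} h_{l+1}` with `hᵢ ∈ H`. -/
def Prop13Four {G X : Type*} [Group G] [MetricSpace X] [MulAction G X]
    (x : X) (H : Subgroup G) (gn : G) (T L : ℝ) : Prop :=
  ∀ l : ℕ, 1 ≤ l → ∀ (h : ℕ → G) (e : ℕ → ℤ),
    (∀ i ≤ l, h i ∈ H) →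
    (∀ i < l, e i = 1 ∨ e i = -1) →
    (∀ i, 1 ≤ i → i < l → e (i - 1) = -(e i) → h i ≠ 1) →
    ∀ A : ℕ → G, A 0 = 1 → (∀ i < l, A (i + 1) = A i * h i * gn ^ (e i)) →
    ∀ S : Set X, IsGeodesicSegment S x ((A l * h l) • x) →
    ∀ a ∈ S, ∀ b ∈ S, ∀ I : Set X, IsGeodesicSegment I a b → I ⊆ S → 10 * T ≤ dist a b →
    ∃ u v : G,
      ((∃ j < l, u = A j * h j ∧ v = A j * h j * gn ^ (e j)) ∨
        (∃ j ≤ l, u = A j ∧ v = A j * h j)) ∧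
      ∃ Seg : Set X, IsGeodesicSegment Seg (u • x) (v • x) ∧
        ∃ a' ∈ Seg, ∃ b' ∈ Seg, ∃ τ : Set X, IsGeodesicSegment τ a' b' ∧ τ ⊆ Seg ∧
          T ≤ dist a' b' ∧ InNbhd τ I (2 * L + 100)

lemma geo_mem_left {X : Type*} [MetricSpace X] {s : Set X} {a b : X}
    (hseg : IsGeodesicSegment s a b) : a ∈ s := by
  obtain ⟨f, h0, hd, hiso, him⟩ := hseg
  rw [him]
  exact ⟨0, ⟨le_rfl, dist_nonneg⟩, h0⟩

lemma geo_mem_right {X : Type*} [MetricSpace X] {s : Set X} {a b : X}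
    (hseg : IsGeodesicSegment s a b) : b ∈ s := by
  obtain ⟨f, h0, hd, hiso, him⟩ := hseg
  rw [him]
  exact ⟨dist a b, ⟨dist_nonneg, le_rfl⟩, hd⟩

lemma geo_point {X : Type*} [MetricSpace X] (b : X) : IsGeodesicSegment {b} b b := by
  refine ⟨fun _ => b, rfl, rfl, ?_, ?_⟩
  · intro t₁ ht₁ t₂ ht₂
    rw [dist_self] at ht₁ ht₂
    have h1 : t₁ = 0 := le_antisymm ht₁.2 ht₁.1
    have h2 : t₂ = 0 := le_antisymm ht₂.2 ht₂.1
    rw [h1, h2, dist_self, sub_self, abs_zero]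
  · rw [dist_self, Set.Icc_self, Set.image_singleton]

lemma geo_rev {X : Type*} [MetricSpace X] {s : Set X} {a b : X}
    (hseg : IsGeodesicSegment s a b) : IsGeodesicSegment s b a := by
  obtain ⟨f, h0, hd, hiso, him⟩ := hseg
  have hc : dist b a = dist a b := dist_comm b a
  refine ⟨fun t => f (dist a b - t), ?_, ?_, ?_, ?_⟩
  · show f (dist a b - 0) = b
    rw [sub_zero]; exact hd
  · show f (dist a b - dist b a) = a
    rw [hc, sub_self]; exact h0
  · intro t₁ ht₁ t₂ ht₂
    rw [hc] at ht₁ ht₂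
    have m₁ : dist a b - t₁ ∈ Set.Icc (0:ℝ) (dist a b) := ⟨by linarith [ht₁.2], by linarith [ht₁.1]⟩
    have m₂ : dist a b - t₂ ∈ Set.Icc (0:ℝ) (dist a b) := ⟨by linarith [ht₂.2], by linarith [ht₂.1]⟩
    show dist (f (dist a b - t₁)) (f (dist a b - t₂)) = |t₁ - t₂|
    rw [hiso _ m₁ _ m₂, show dist a b - t₁ - (dist a b - t₂) = -(t₁ - t₂) from by ring, abs_neg]
  · show s = (fun t => f (dist a b - t)) '' Set.Icc 0 (dist b a)
    rw [hc, him, ← Set.image_image f (fun t => dist a b - t), Set.image_const_sub_Icc, sub_self,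
      sub_zero]

lemma geo_smul {G X : Type*} [Group G] [MetricSpace X] [MulAction G X]
    (hiso : ∀ (g : G) (a b : X), dist (g • a) (g • b) = dist a b)
    {s : Set X} {a b : X} (g : G) (hseg : IsGeodesicSegment s a b) :
    IsGeodesicSegment ((fun p => g • p) '' s) (g • a) (g • b) := by
  obtain ⟨f, h0, hd, hfi, him⟩ := hseg
  have hc : dist (g • a) (g • b) = dist a b := hiso g a b
  refine ⟨fun t => g • f t, by show g • f 0 = g • a; rw [h0], by show g • f (dist (g•a) (g•b)) = g • b; rw [hc, hd], ?_, ?_⟩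
  · intro t₁ ht₁ t₂ ht₂
    rw [hc] at ht₁ ht₂
    show dist (g • f t₁) (g • f t₂) = |t₁ - t₂|
    rw [hiso]; exact hfi t₁ ht₁ t₂ ht₂
  · rw [hc, him]
    exact Set.image_image _ _ _

lemma geo_close {X : Type*} [MetricSpace X] (hhyp : DeltaHyperbolic X 1)
    {γ S : Set X} {a b : X} (hγ : IsGeodesicSegment γ a b) (hS : IsGeodesicSegment S a b) :
    ∀ p ∈ γ, ∃ q ∈ S, dist p q ≤ 1 := by
  intro p hp
  obtain ⟨q, hq, hle⟩ := hhyp a b b γ S {b} hγ hS (geo_point b) p hp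
  rcases hq with hq | hq
  · exact ⟨q, hq, hle⟩
  · rw [Set.mem_singleton_iff] at hq
    exact ⟨b, geo_mem_right hS, hq ▸ hle⟩

lemma claimA {X : Type*} [MetricSpace X] (hhyp : DeltaHyperbolic X 1)
    (a b c : X) (f : ℝ → X) (hf0 : f 0 = a) (hfD : f (dist a c) = c)
    (hfiso : ∀ t₁ ∈ Set.Icc (0:ℝ) (dist a c), ∀ t₂ ∈ Set.Icc (0:ℝ) (dist a c),
      dist (f t₁) (f t₂) = |t₁ - t₂|)
    (T : Set X) (hT : IsGeodesicSegment T c b)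
    (pr : ℝ) (hpr : ∀ q ∈ T, pr ≤ dist a q)
    (S : Set X) (hS : IsGeodesicSegment S a b)
    (s : ℝ) (hs : s ∈ Set.Icc (0:ℝ) (dist a c)) (hspr : s ≤ pr) :
    ∃ q ∈ S, dist (f s) q ≤ 2 := by
  have hDac0 : (0:ℝ) ≤ dist a c := dist_nonneg
  have hγ : IsGeodesicSegment (f '' Set.Icc 0 (dist a c)) a c := ⟨f, hf0, hfD, hfiso, rfl⟩
  have haS : a ∈ S := geo_mem_left hS
  have hdx : ∀ u ∈ Set.Icc (0:ℝ) (dist a c), dist a (f u) = u := by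
    intro u hu
    rw [← hf0, hfiso 0 ⟨le_rfl, hDac0⟩ u hu, zero_sub, abs_neg, abs_of_nonneg hu.1]
  have L1 : ∀ u ∈ Set.Icc (0:ℝ) (dist a c), u < pr - 1 → Metric.infDist (f u) S ≤ 1 := by
    intro u hu hu1
    obtain ⟨q, hq, hle⟩ := hhyp a c b (f '' Set.Icc 0 (dist a c)) S T hγ hS hT (f u) ⟨u, hu, rfl⟩
    rcases hq with hq | hq
    · exact (Metric.infDist_le_dist_of_mem hq).trans hle
    · exfalso
      have h1 := hpr q hq
      have h2 := dist_triangle a (f u) q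
      rw [hdx u hu] at h2
      linarith
  have key : Metric.infDist (f s) S ≤ 2 := by
    refine le_of_forall_pos_le_add ?_
    intro ε hε
    by_cases hπ1 : pr ≤ 1 + ε
    · have h1 : Metric.infDist (f s) S ≤ dist (f s) a := Metric.infDist_le_dist_of_mem haS
      have h2 : dist (f s) a = s := by rw [dist_comm]; exact hdx s hs
      linarith
    · push_neg at hπ1
      have hu0 : 0 ≤ min s (pr - 1 - ε/2) := le_min hs.1 (by linarith)
      have huD : min s (pr - 1 - ε/2) ≤ dist a c := (min_le_left _ _).trans hs.2
      have h4 := L1 _ ⟨hu0, huD⟩ (lt_of_le_of_lt (min_le_right _ _) (by linarith))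
      have h5 : dist (f s) (f (min s (pr - 1 - ε/2))) = s - min s (pr - 1 - ε/2) := by
        rw [hfiso s hs _ ⟨hu0, huD⟩, abs_of_nonneg (sub_nonneg.mpr (min_le_left _ _))]
      have h6 : s - min s (pr - 1 - ε/2) ≤ 1 + ε/2 := by
        rcases le_total s (pr - 1 - ε/2) with h | h
        · rw [min_eq_left h]; linarith
        · rw [min_eq_right h]; linarith
      have h7 : Metric.infDist (f s) S ≤
          Metric.infDist (f (min s (pr - 1 - ε/2))) S + dist (f s) (f (min s (pr - 1 - ε/2))) :=
        Metric.infDist_le_infDist_add_dist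
      linarith
  obtain ⟨fS, hS0, hSd, hSiso, hSim⟩ := id hS
  have hScomp : IsCompact S := by
    rw [hSim]
    refine IsCompact.image_of_continuousOn isCompact_Icc ?_
    rw [Metric.continuousOn_iff]
    intro p hp ε hε
    refine ⟨ε, hε, fun q hq hlt => ?_⟩
    rw [hSiso q hq p hp, ← Real.dist_eq]
    exact hlt
  obtain ⟨q, hqS, hqd⟩ := hScomp.exists_infDist_eq_dist ⟨a, haS⟩ (f s)
  exact ⟨q, hqS, by rw [← hqd]; exact key⟩

set_option maxHeartbeats 2000000 in
/-- **Lemma 19(1).** Let `M = (g₁, …, gₙ)` (here `n = m+1`) be a minimal tuple of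
isometries of a `1`-hyperbolic geodesic space with base point `x`, with
`|gᵢ|_x ≤ |gₙ|_x` for `i ≤ n-1`, let `H = ⟨g₁, …, g_{n-1}⟩` and suppose `d₂ ≥ 0` is
such that every geodesic `[x, hx]`, `h ∈ H`, lies in the
`max_{i<n} (|gᵢ|_x/2 + d₂)`-neighborhood of the orbit `Hx`. Let `N ≥ 1` be an integer.
Then either `‖gₙ‖ < 2N + 2d₂ + 5`, or there are a point `r` and geodesic segments
`s₁ = [x,r]`, `s₂ = [r, gₙ²x]` such that `s₁ ∪ s₂` has length at most `|gₙ²|_x + 2`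
and lies in the `2`-neighborhood of any geodesic `[x, gₙ²x]`, `s₁` lies in the
`2`-neighborhood of any `[x, gₙx]`, `s₂` lies in the `2`-neighborhood of any
`gₙ[x, gₙx]`, and `d(x,r) ≥ |gₙ|_x/2 + N + d₂`, `d(r, gₙ²x) ≥ |gₙ|_x/2 + N + d₂`. -/
theorem lemma19_part1
    (G : Type*) [Group G] (X : Type*) [MetricSpace X] [MulAction G X]
    (hgeo : GeodesicSpace X) (hhyp : DeltaHyperbolic X 1)
    (hiso : ∀ (g : G) (a b : X), dist (g • a) (g • b) = dist a b)
    (x : X) (m : ℕ) (M : Fin (m + 1) → G) (hmin : MinimalTuple x M)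
    (hord : ∀ i : Fin m, dist x (M i.castSucc • x) ≤ dist x (M (Fin.last m) • x))
    (d₂ : ℝ) (hd₂ : 0 ≤ d₂)
    (hH : ∀ h ∈ Subgroup.closure (Set.range fun i : Fin m => M i.castSucc),
      ∀ S : Set X, IsGeodesicSegment S x (h • x) → ∀ p ∈ S,
        ∃ h' ∈ Subgroup.closure (Set.range fun i : Fin m => M i.castSucc), ∃ i : Fin m,
          dist p (h' • x) ≤ dist x (M i.castSucc • x) / 2 + d₂)
    (N : ℕ) (hN : 1 ≤ N) :
    (⨅ y : X, dist y (M (Fin.last m) • y)) < 2 * N + 2 * d₂ + 5 ∨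
    ∃ (r : X) (s₁ s₂ : Set X),
      IsGeodesicSegment s₁ x r ∧
      IsGeodesicSegment s₂ r ((M (Fin.last m) * M (Fin.last m)) • x) ∧
      dist x r + dist r ((M (Fin.last m) * M (Fin.last m)) • x) ≤
        dist x ((M (Fin.last m) * M (Fin.last m)) • x) + 2 ∧
      (∀ S : Set X, IsGeodesicSegment S x ((M (Fin.last m) * M (Fin.last m)) • x) →
        InNbhd (s₁ ∪ s₂) S 2) ∧
      (∀ S : Set X, IsGeodesicSegment S x (M (Fin.last m) • x) → InNbhd s₁ S 2) ∧
      (∀ S : Set X, IsGeodesicSegment S (M (Fin.last m) • x)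
        ((M (Fin.last m) * M (Fin.last m)) • x) → InNbhd s₂ S 2) ∧
      dist x (M (Fin.last m) • x) / 2 + N + d₂ ≤ dist x r ∧
      dist x (M (Fin.last m) • x) / 2 + N + d₂ ≤
        dist r ((M (Fin.last m) * M (Fin.last m)) • x) := by
  classical
  set g := M (Fin.last m) with hgdef
  obtain ⟨σ0, hσ0⟩ := hgeo x (g • x)
  obtain ⟨γ, hγ⟩ := hgeo x ((g * g) • x)
  obtain ⟨h, hh0, hhd, hhiso, hhim⟩ := id hσ0
  obtain ⟨f, hf0, hfD, hfiso, hfim⟩ := id hγ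
  have hd0 : (0:ℝ) ≤ dist x (g • x) := dist_nonneg
  have hD0 : (0:ℝ) ≤ dist x ((g * g) • x) := dist_nonneg
  have hgg : (g * g) • x = g • g • x := mul_smul g g x
  have hN1 : (1:ℝ) ≤ (N:ℝ) := by exact_mod_cast hN
  have hgs : IsGeodesicSegment ((fun p => g • p) '' σ0) (g • x) ((g * g) • x) := by
    rw [hgg]; exact geo_smul hiso g hσ0
  have h0m : (0:ℝ) ∈ Set.Icc (0:ℝ) (dist x (g • x)) := ⟨le_rfl, hd0⟩
  have hdm : dist x (g • x) ∈ Set.Icc (0:ℝ) (dist x (g • x)) := ⟨hd0, le_rfl⟩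
  have hhalf : dist x (g • x) / 2 ∈ Set.Icc (0:ℝ) (dist x (g • x)) := ⟨by linarith, by linarith⟩
  have h0M : (0:ℝ) ∈ Set.Icc (0:ℝ) (dist x ((g * g) • x)) := ⟨le_rfl, hD0⟩
  have hDM : dist x ((g * g) • x) ∈ Set.Icc (0:ℝ) (dist x ((g * g) • x)) := ⟨hD0, le_rfl⟩
  have hHM : dist x ((g * g) • x) / 2 ∈ Set.Icc (0:ℝ) (dist x ((g * g) • x)) :=
    ⟨by linarith, by linarith⟩
  have hdxm0 : dist x (h (dist x (g • x) / 2)) = dist x (g • x) / 2 := by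
    have e := hhiso 0 h0m _ hhalf
    rw [hh0] at e
    rw [e, zero_sub, abs_neg, abs_of_nonneg (by linarith)]
  have hdm0g : dist (h (dist x (g • x) / 2)) (g • x) = dist x (g • x) / 2 := by
    have e := hhiso _ hhalf _ hdm
    rw [hhd] at e
    rw [e, abs_of_nonpos (by linarith)]
    ring
  have hgu : ∀ u ∈ Set.Icc (0:ℝ) (dist x (g • x)), dist (g • h u) (g • x) = u := by
    intro u hu
    have e := hhiso u hu 0 h0m
    rw [hh0] at e
    calc dist (g • h u) (g • x) = dist (h u) x := hiso g (h u) x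
    _ = u := by rw [e, sub_zero, abs_of_nonneg hu.1]
  have hguD : ∀ u ∈ Set.Icc (0:ℝ) (dist x (g • x)),
      dist (g • h u) ((g * g) • x) = dist x (g • x) - u := by
    intro u hu
    have e := hhiso u hu _ hdm
    rw [hhd] at e
    calc dist (g • h u) ((g * g) • x) = dist (g • h u) (g • g • x) := by rw [hgg]
    _ = dist (h u) (g • x) := hiso g (h u) (g • x)
    _ = dist x (g • x) - u := by rw [e, abs_of_nonpos (by linarith [hu.2])]; ring
  have hinfle : ∀ w : X, (⨅ y : X, dist y (g • y)) ≤ dist w (g • w) := fun w =>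
    ciInf_le ⟨0, by rintro v ⟨y, rfl⟩; exact dist_nonneg⟩ w
  by_cases hcase : dist x ((g * g) • x) < dist x (g • x) + 2 * N + 2 * d₂ + 1
  · left
    obtain ⟨q, hq, hq1⟩ := hhyp x (g • x) ((g * g) • x) σ0 γ ((fun p => g • p) '' σ0)
      hσ0 hγ hgs (h (dist x (g • x) / 2)) (by rw [hhim]; exact ⟨_, hhalf, rfl⟩)
    rcases hq with hq | hq
    · -- q ∈ γ : q = f σ
      rw [hfim] at hq
      obtain ⟨σ, hσm, rfl⟩ := hq
      obtain ⟨q', hq', hq'1⟩ := hhyp (g • x) ((g * g) • x) x ((fun p => g • p) '' σ0) σ0 γ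
        hgs (geo_rev hσ0) (geo_rev hγ) (g • h (dist x (g • x) / 2))
        ⟨_, by rw [hhim]; exact ⟨_, hhalf, rfl⟩, rfl⟩
      rcases hq' with hq' | hq'
      · -- q' ∈ σ0
        rw [hhim] at hq'
        obtain ⟨v, hvm, rfl⟩ := hq'
        have e1 : dist (h v) (g • x) = dist x (g • x) - v := by
          have e := hhiso v hvm _ hdm
          rw [hhd] at e
          rw [e, abs_of_nonpos (by linarith [hvm.2])]; ring
        have e2 : dist (g • h (dist x (g • x) / 2)) (g • x) = dist x (g • x) / 2 :=
          hgu _ hhalf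
        have e3 := abs_dist_sub_le (h v) (g • h (dist x (g • x) / 2)) (g • x)
        rw [e1, e2] at e3
        rw [show dist x (g • x) - v - dist x (g • x) / 2 = dist x (g • x) / 2 - v from by ring]
          at e3
        have e4 : |dist x (g • x) / 2 - v| ≤ 1 := by
          linarith [dist_comm (h v) (g • h (dist x (g • x) / 2)), hq'1]
        have e5 : dist (h (dist x (g • x) / 2)) (h v) = |dist x (g • x) / 2 - v| :=
          hhiso _ hhalf v hvm
        have e6 : dist (h (dist x (g • x) / 2)) (g • h (dist x (g • x) / 2)) ≤ 2 := by
          linarith [dist_triangle (h (dist x (g • x) / 2)) (h v)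
            (g • h (dist x (g • x) / 2)), e5, e4,
            dist_comm (h v) (g • h (dist x (g • x) / 2)), hq'1]
        linarith [hinfle (h (dist x (g • x) / 2))]
      · -- q' ∈ γ : q' = f σ'
        rw [hfim] at hq'
        obtain ⟨σ', hσ'm, rfl⟩ := hq'
        have dxσ : dist x (f σ) = σ := by
          have e := hfiso 0 h0M σ hσm
          rw [hf0] at e
          rw [e, zero_sub, abs_neg, abs_of_nonneg hσm.1]
        have dxσ' : dist x (f σ') = σ' := by
          have e := hfiso 0 h0M σ' hσ'm
          rw [hf0] at e
          rw [e, zero_sub, abs_neg, abs_of_nonneg hσ'm.1]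
        have dσ'D : dist (f σ') ((g * g) • x) = dist x ((g * g) • x) - σ' := by
          have e := hfiso σ' hσ'm _ hDM
          rw [hfD] at e
          rw [e, abs_of_nonpos (by linarith [hσ'm.2])]; ring
        have egm2 : dist (g • h (dist x (g • x) / 2)) ((g * g) • x) = dist x (g • x) / 2 := by
          rw [hguD _ hhalf]; ring
        have egmg : dist (g • h (dist x (g • x) / 2)) (g • x) = dist x (g • x) / 2 :=
          hgu _ hhalf
        have a1 : σ ≤ dist x (g • x) / 2 + 1 := by
          linarith [dist_triangle x (h (dist x (g • x) / 2)) (f σ), hdxm0, dxσ, hq1]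
        have a2 : dist x (g • x) / 2 - 1 ≤ σ := by
          linarith [dist_triangle x (f σ) (h (dist x (g • x) / 2)), dxσ, hdxm0,
            dist_comm (h (dist x (g • x) / 2)) (f σ), hq1]
        have a3 : dist x (g • x) / 2 - 1 ≤ σ' := by
          linarith [dist_triangle x (g • h (dist x (g • x) / 2)) (g • x), egmg,
            dist_triangle x (f σ') (g • h (dist x (g • x) / 2)), dxσ',
            dist_comm (g • h (dist x (g • x) / 2)) (f σ'), hq'1]
        have a4 : σ' ≤ dist x ((g * g) • x) - dist x (g • x) / 2 + 1 := by
          linarith [dist_triangle (g • h (dist x (g • x) / 2)) (f σ') ((g * g) • x),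
            egm2, dσ'D, hq'1]
        have dσσ' : dist (f σ) (f σ') = |σ - σ'| := hfiso σ hσm σ' hσ'm
        have dmgm : dist (h (dist x (g • x) / 2)) (g • h (dist x (g • x) / 2)) ≤
            2 + |σ - σ'| := by
          linarith [dist_triangle (h (dist x (g • x) / 2)) (f σ)
              (g • h (dist x (g • x) / 2)),
            dist_triangle (f σ) (f σ') (g • h (dist x (g • x) / 2)), dσσ', hq1,
            dist_comm (g • h (dist x (g • x) / 2)) (f σ'), hq'1]
        have final : dist (h (dist x (g • x) / 2)) (g • h (dist x (g • x) / 2)) <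
            2 * N + 2 * d₂ + 5 := by
          rcases le_total σ' σ with hle | hle
          · rw [abs_of_nonneg (by linarith)] at dmgm
            linarith
          · rw [abs_of_nonpos (by linarith)] at dmgm
            linarith
        linarith [hinfle (h (dist x (g • x) / 2))]
    · -- q ∈ gσ0
      obtain ⟨p0, hp0, rfl⟩ := hq
      rw [hhim] at hp0
      obtain ⟨u, hum, rfl⟩ := hp0
      have e3 := abs_dist_sub_le (g • h u) (h (dist x (g • x) / 2)) (g • x)
      rw [hgu u hum, hdm0g] at e3
      have e4 : |u - dist x (g • x) / 2| ≤ 1 := by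
        linarith [dist_comm (g • h u) (h (dist x (g • x) / 2)), hq1]
      have e5 : dist (h u) (h (dist x (g • x) / 2)) = |u - dist x (g • x) / 2| :=
        hhiso u hum _ hhalf
      have e6 : dist (h u) (g • h u) ≤ 2 := by
        linarith [dist_triangle (h u) (h (dist x (g • x) / 2)) (g • h u), e5, e4, hq1]
      linarith [hinfle (h u)]
  · push_neg at hcase
    right
    have hdxr : dist x (f (dist x ((g * g) • x) / 2)) = dist x ((g * g) • x) / 2 := by
      have e := hfiso 0 h0M _ hHM
      rw [hf0] at e
      rw [e, zero_sub, abs_neg, abs_of_nonneg (by linarith)]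
    have hdrg : dist (f (dist x ((g * g) • x) / 2)) ((g * g) • x) = dist x ((g * g) • x) / 2 := by
      have e := hfiso _ hHM _ hDM
      rw [hfD] at e
      rw [e, abs_of_nonpos (by linarith)]; ring
    refine ⟨f (dist x ((g * g) • x) / 2), f '' Set.Icc 0 (dist x ((g * g) • x) / 2),
      f '' Set.Icc (dist x ((g * g) • x) / 2) (dist x ((g * g) • x)),
      ?_, ?_, ?_, ?_, ?_, ?_, ?_, ?_⟩
    · refine ⟨f, hf0, ?_, ?_, ?_⟩
      · rw [hdxr]
      · intro t₁ ht₁ t₂ ht₂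
        rw [hdxr] at ht₁ ht₂
        exact hfiso t₁ ⟨ht₁.1, by linarith [ht₁.2]⟩ t₂ ⟨ht₂.1, by linarith [ht₂.2]⟩
      · rw [hdxr]
    · refine ⟨fun t => f (dist x ((g * g) • x) / 2 + t), ?_, ?_, ?_, ?_⟩
      · show f (dist x ((g * g) • x) / 2 + 0) = f (dist x ((g * g) • x) / 2)
        rw [add_zero]
      · show f (dist x ((g * g) • x) / 2 +
            dist (f (dist x ((g * g) • x) / 2)) ((g * g) • x)) = (g * g) • x
        rw [hdrg, add_halves]
        exact hfD
      · intro t₁ ht₁ t₂ ht₂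
        rw [hdrg] at ht₁ ht₂
        show dist (f (dist x ((g * g) • x) / 2 + t₁)) (f (dist x ((g * g) • x) / 2 + t₂)) =
          |t₁ - t₂|
        rw [hfiso _ ⟨by linarith [ht₁.1], by linarith [ht₁.2]⟩
            _ ⟨by linarith [ht₂.1], by linarith [ht₂.2]⟩,
          show dist x ((g * g) • x) / 2 + t₁ - (dist x ((g * g) • x) / 2 + t₂) = t₁ - t₂
            from by ring]
      · rw [hdrg, show Set.Icc (dist x ((g * g) • x) / 2) (dist x ((g * g) • x)) =
            (fun t => dist x ((g * g) • x) / 2 + t) '' Set.Icc (0:ℝ) (dist x ((g * g) • x) / 2)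
            from by rw [Set.image_const_add_Icc, add_zero, add_halves]]
        exact Set.image_image _ _ _
    · rw [hdxr, hdrg]; linarith
    · intro S hS p hp
      have hpγ : p ∈ f '' Set.Icc 0 (dist x ((g * g) • x)) := by
        rw [← Set.Icc_union_Icc_eq_Icc (by linarith : (0:ℝ) ≤ dist x ((g * g) • x) / 2)
          (by linarith : dist x ((g * g) • x) / 2 ≤ dist x ((g * g) • x)), Set.image_union]
        exact hp
      obtain ⟨q, hq, hle⟩ := geo_close hhyp hγ hS p (by rw [hfim]; exact hpγ)
      exact ⟨q, hq, by linarith⟩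
    · intro S hS p hp
      obtain ⟨s, hsm, rfl⟩ := hp
      have hpr : ∀ q ∈ ((fun p => g • p) '' σ0), dist x ((g * g) • x) / 2 ≤ dist x q := by
        rintro q ⟨p0, hp0, rfl⟩
        rw [hhim] at hp0
        obtain ⟨u, hum, rfl⟩ := hp0
        have t1 := dist_triangle x (g • h u) ((g * g) • x)
        have t2 := dist_triangle x (g • h u) (g • x)
        rw [hguD u hum] at t1
        rw [hgu u hum] at t2
        linarith
      exact claimA hhyp x (g • x) ((g * g) • x) f hf0 hfD hfiso _ (geo_rev hgs) _ hpr S hS s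
        ⟨hsm.1, by linarith [hsm.2]⟩ hsm.2
    · intro S hS p hp
      obtain ⟨u, hum, rfl⟩ := hp
      have hrd : dist ((g * g) • x) x = dist x ((g * g) • x) := dist_comm _ _
      have hpr : ∀ q ∈ σ0, dist x ((g * g) • x) / 2 ≤ dist ((g * g) • x) q := by
        intro q hqσ
        rw [hhim] at hqσ
        obtain ⟨u', hu'm, rfl⟩ := hqσ
        have e1 : dist x (h u') = u' := by
          have e := hhiso 0 h0m u' hu'm
          rw [hh0] at e
          rw [e, zero_sub, abs_neg, abs_of_nonneg hu'm.1]
        have e2 : dist (h u') (g • x) = dist x (g • x) - u' := by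
          have e := hhiso u' hu'm _ hdm
          rw [hhd] at e
          rw [e, abs_of_nonpos (by linarith [hu'm.2])]; ring
        have e3 : dist (g • x) ((g * g) • x) = dist x (g • x) := by
          rw [hgg]; exact hiso g x (g • x)
        have t1 := dist_triangle x (h u') ((g * g) • x)
        have t2 := dist_triangle (g • x) (h u') ((g * g) • x)
        rw [e1] at t1
        rw [e3, dist_comm (g • x) (h u'), e2] at t2
        linarith [dist_comm ((g * g) • x) (h u')]
      have key : ∃ q ∈ S,
          dist (f (dist x ((g * g) • x) - (dist x ((g * g) • x) - u))) q ≤ 2 := by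
        refine claimA hhyp ((g * g) • x) (g • x) x (fun t => f (dist x ((g * g) • x) - t))
          ?_ ?_ ?_ σ0 hσ0 (dist x ((g * g) • x) / 2) hpr S (geo_rev hS)
          (dist x ((g * g) • x) - u) ?_ ?_
        · show f (dist x ((g * g) • x) - 0) = (g * g) • x
          rw [sub_zero]; exact hfD
        · show f (dist x ((g * g) • x) - dist ((g * g) • x) x) = x
          rw [hrd, sub_self]; exact hf0
        · intro t₁ ht₁ t₂ ht₂
          rw [hrd] at ht₁ ht₂
          show dist (f (dist x ((g * g) • x) - t₁)) (f (dist x ((g * g) • x) - t₂)) = |t₁ - t₂|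
          rw [hfiso _ ⟨by linarith [ht₁.2], by linarith [ht₁.1]⟩
              _ ⟨by linarith [ht₂.2], by linarith [ht₂.1]⟩,
            show dist x ((g * g) • x) - t₁ - (dist x ((g * g) • x) - t₂) = -(t₁ - t₂)
              from by ring, abs_neg]
        · rw [hrd]
          exact ⟨by linarith [hum.2], by linarith [hum.1]⟩
        · linarith [hum.1]
      obtain ⟨q, hq, hle⟩ := key
      refine ⟨q, hq, ?_⟩
      rw [show dist x ((g * g) • x) - (dist x ((g * g) • x) - u) = u from by ring] at hle
      exact hle
    · rw [hdxr]; linarith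
    · rw [hdrg]; linarith
end

section
/- Let G be a group acting by isometries on a 1-hyperbolic geodesic metric space (X,d) with base point x ∈ X, let M = (g_1, …, g_n) ∈ Gⁿ be a minimal n-tuple with |g_i|_x ≤ |g_n|_x for 1 ≤ i ≤ n−1, let H = ⟨g_1, …, g_{n−1}⟩, and suppose d_2 ≥ 0 is a constant such that every geodesic segment [x, hx] with h ∈ H is contained in the a-neighborhood of the orbit Hx, where a = max_{1≤i≤n−1}(|g_i|_x/2 + d_2). Then for every h ∈ H and ε ∈ {−1,1} there exists a point r ∈ X and geodesic segments such that the path w = [x,r] ∪ [r, hg_n^ε x] has length at most |hg_n^ε|_x + 2 and lies in the 2-neighborhood of any geodesic segment [x, hg_n^ε x], the segment [x,r] lies in the 2-neighborhood of [x, hx], the segment [r, hg_n^ε x] lies in the 2-neighborhood of h[x, g_n^ε x], and d(r, x) ≥ |h|_x/2 − 3 and d(r, hg_n^ε x) ≥ |g_n|_x/2 − (3 + d_2). -/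
set_option linter.unusedVariables false

section GeoAux

variable {X : Type*} [MetricSpace X]

lemma geo_left_mem {s : Set X} {a b : X} (hs : IsGeodesicSegment s a b) : a ∈ s := by
  obtain ⟨f, h0, hL, hiso, him⟩ := hs
  rw [him]
  exact ⟨0, ⟨le_refl 0, dist_nonneg⟩, h0⟩

lemma geo_right_mem {s : Set X} {a b : X} (hs : IsGeodesicSegment s a b) : b ∈ s := by
  obtain ⟨f, h0, hL, hiso, him⟩ := hs
  rw [him]
  exact ⟨dist a b, ⟨dist_nonneg, le_refl _⟩, hL⟩

lemma geo_singleton (b : X) : IsGeodesicSegment {b} b b := by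
  refine ⟨fun _ => b, rfl, rfl, ?_, ?_⟩
  · intro t₁ ht₁ t₂ ht₂
    simp only [dist_self] at ht₁ ht₂ ⊢
    have h1 : t₁ = 0 := le_antisymm ht₁.2 ht₁.1
    have h2 : t₂ = 0 := le_antisymm ht₂.2 ht₂.1
    simp [h1, h2]
  · simp [dist_self, Set.Icc_self]

lemma geo_symm {s : Set X} {a b : X} (hs : IsGeodesicSegment s a b) : IsGeodesicSegment s b a := by
  obtain ⟨f, h0, hL, hiso, him⟩ := hs
  have hd : dist b a = dist a b := dist_comm b a
  refine ⟨fun t => f (dist a b - t), ?_, ?_, ?_, ?_⟩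
  · simp [hL]
  · simp [hd, h0]
  · intro t₁ ht₁ t₂ ht₂
    rw [hd] at ht₁ ht₂
    have m₁ : dist a b - t₁ ∈ Set.Icc (0:ℝ) (dist a b) :=
      ⟨by linarith [ht₁.2], by linarith [ht₁.1]⟩
    have m₂ : dist a b - t₂ ∈ Set.Icc (0:ℝ) (dist a b) :=
      ⟨by linarith [ht₂.2], by linarith [ht₂.1]⟩
    rw [hiso _ m₁ _ m₂]
    rw [show dist a b - t₁ - (dist a b - t₂) = -(t₁ - t₂) by ring, abs_neg]
  · rw [hd, him]
    have himg : (fun t => dist a b - t) '' Set.Icc (0:ℝ) (dist a b) =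
        Set.Icc (0:ℝ) (dist a b) := by
      rw [Set.image_const_sub_Icc]
      simp
    calc f '' Set.Icc (0:ℝ) (dist a b) = f '' ((fun t => dist a b - t) '' Set.Icc 0 (dist a b)) := by
          rw [himg]
      _ = (fun t => f (dist a b - t)) '' Set.Icc 0 (dist a b) := Set.image_image f _ _

lemma infDist_witness {S : Set X} {a b : X} (hS : IsGeodesicSegment S a b) {p : X} {c : ℝ}
    (hc : Metric.infDist p S ≤ c) : ∃ q ∈ S, dist p q ≤ c := by
  obtain ⟨f, h0, hL, hiso, him⟩ := hS
  have hlip : LipschitzOnWith 1 f (Set.Icc 0 (dist a b)) := by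
    rw [lipschitzOnWith_iff_dist_le_mul]
    intro s hs t ht
    rw [hiso s hs t ht, Real.dist_eq]; simp
  have hK : IsCompact S := by
    rw [him]; exact (isCompact_Icc).image_of_continuousOn hlip.continuousOn
  have hne : S.Nonempty := ⟨a, by rw [him]; exact ⟨0, ⟨le_refl 0, dist_nonneg⟩, h0⟩⟩
  obtain ⟨q, hq, heq⟩ := hK.exists_infDist_eq_dist hne p
  exact ⟨q, hq, by rw [← heq]; exact hc⟩

lemma close_geo (hhyp : DeltaHyperbolic X 1) {S S' : Set X} {a b : X}
    (hS : IsGeodesicSegment S a b) (hS' : IsGeodesicSegment S' a b) :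
    ∀ p ∈ S, ∃ q ∈ S', dist p q ≤ 1 := by
  have hth := hhyp a b b S S' ({b} : Set X) hS hS' (geo_singleton b)
  intro p hp
  obtain ⟨q, hq, hd⟩ := hth p hp
  rcases hq with hq | hq
  · exact ⟨q, hq, hd⟩
  · rw [Set.mem_singleton_iff] at hq
    exact ⟨b, geo_right_mem hS', by rwa [hq] at hd⟩

lemma nbhd_two (hgeo : GeodesicSpace X) (hhyp : DeltaHyperbolic X 1)
    {a r w c : X} {s₁ S : Set X} (hs₁ : IsGeodesicSegment s₁ a r)
    (hS : IsGeodesicSegment S a w) (hc : c ∈ S) (hrc : dist r c ≤ 1) :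
    InNbhd s₁ S 2 := by
  obtain ⟨f, h0, hL, hiso, him⟩ := hS
  have hcm := hc
  rw [him] at hcm
  obtain ⟨t, ht, rfl⟩ := hcm
  have hdat : dist a (f t) = t := by
    have h00 : (0:ℝ) ∈ Set.Icc 0 (dist a w) := ⟨le_refl _, dist_nonneg⟩
    rw [← h0, hiso 0 h00 t ht, zero_sub, abs_neg, abs_of_nonneg ht.1]
  have hinit : IsGeodesicSegment (f '' Set.Icc 0 t) a (f t) := by
    refine ⟨f, h0, ?_, ?_, ?_⟩
    · rw [hdat]
    · intro t₁ ht₁ t₂ ht₂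
      rw [hdat] at ht₁ ht₂
      have hsub : Set.Icc (0:ℝ) t ⊆ Set.Icc 0 (dist a w) := Set.Icc_subset_Icc_right ht.2
      exact hiso t₁ (hsub ht₁) t₂ (hsub ht₂)
    · rw [hdat]
  obtain ⟨γ, hγ⟩ := hgeo r (f t)
  have hthin := hhyp a r (f t) s₁ (f '' Set.Icc 0 t) γ hs₁ hinit hγ
  intro p hp
  obtain ⟨q, hq, hpq⟩ := hthin p hp
  rcases hq with hq | hq
  · refine ⟨q, ?_, by linarith⟩
    rw [him]
    exact Set.image_mono (f := f) (Set.Icc_subset_Icc_right ht.2) hq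
  · obtain ⟨g, hg0, hgL, hgiso, hgim⟩ := hγ
    rw [hgim] at hq
    obtain ⟨u, hu, rfl⟩ := hq
    have hqc : dist (g u) (f t) ≤ 1 := by
      have hLm : dist r (f t) ∈ Set.Icc (0:ℝ) (dist r (f t)) := ⟨dist_nonneg, le_refl _⟩
      have heq := hgiso u hu (dist r (f t)) hLm
      rw [hgL] at heq
      rw [heq, abs_of_nonpos (by linarith [hu.2] : u - dist r (f t) ≤ 0)]
      linarith [hu.1, hrc]
    exact ⟨f t, hc, by linarith [dist_triangle p (g u) (f t)]⟩

end GeoAux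

section NielsenAux

variable {G : Type*} [Group G] {m : ℕ}

private def Ttup (M : Fin (m+1) → G) (w : G) : Fin (m+1) → G :=
  Function.update M (Fin.last m) w

lemma move_inv_last (M : Fin (m+1) → G) (w : G) :
    NielsenMove (Ttup M w) (Ttup M w⁻¹) := by
  have h := NielsenMove.inv (Ttup M w) (Fin.last m)
  have e : Function.update (Ttup M w) (Fin.last m) ((Ttup M w) (Fin.last m))⁻¹
      = Ttup M w⁻¹ := by
    simp [Ttup, Function.update_idem]
  rwa [e] at h

lemma move_mul_right (M : Fin (m+1) → G) (w : G) (j : Fin (m+1)) (hj : j ≠ Fin.last m) :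
    NielsenMove (Ttup M w) (Ttup M (w * M j)) := by
  have h := NielsenMove.mul (Ttup M w) (Fin.last m) j (Ne.symm hj)
  have e : Function.update (Ttup M w) (Fin.last m) ((Ttup M w) (Fin.last m) * (Ttup M w) j)
      = Ttup M (w * M j) := by
    simp [Ttup, Function.update_idem, Function.update_of_ne hj]
  rwa [e] at h

lemma chain_left_inv (M : Fin (m+1) → G) (w : G) (j : Fin (m+1)) (hj : j ≠ Fin.last m) :
    Relation.ReflTransGen NielsenMove (Ttup M w) (Ttup M ((M j)⁻¹ * w)) := by
  have h1 := move_inv_last M w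
  have h2 := move_mul_right M w⁻¹ j hj
  have h3 := move_inv_last M (w⁻¹ * M j)
  have e : (w⁻¹ * M j)⁻¹ = (M j)⁻¹ * w := by group
  rw [e] at h3
  exact Relation.ReflTransGen.head h1
    (Relation.ReflTransGen.head h2 (Relation.ReflTransGen.single h3))

lemma chain_left_mul (M : Fin (m+1) → G) (w : G) (j : Fin (m+1)) (hj : j ≠ Fin.last m) :
    Relation.ReflTransGen NielsenMove (Ttup M w) (Ttup M (M j * w)) := by
  set M₁ := Function.update M j (M j)⁻¹ with hM₁
  have hM₁j : M₁ j = (M j)⁻¹ := by rw [hM₁]; exact Function.update_self _ _ _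
  have hm1 : NielsenMove (Ttup M w) (Ttup M₁ w) := by
    have h := NielsenMove.inv (Ttup M w) j
    have e : Function.update (Ttup M w) j ((Ttup M w) j)⁻¹ = Ttup M₁ w := by
      have hv : (Ttup M w) j = M j := Function.update_of_ne hj _ _
      rw [hv, Ttup, Ttup, hM₁]
      exact Function.update_comm (Ne.symm hj) _ _ _
    rwa [e] at h
  have hm2 : NielsenMove (Ttup M₁ w) (Ttup M₁ w⁻¹) := move_inv_last M₁ w
  have hm3 : NielsenMove (Ttup M₁ w⁻¹) (Ttup M₁ (w⁻¹ * M₁ j)) := move_mul_right M₁ w⁻¹ j hj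
  rw [hM₁j] at hm3
  have hm4 : NielsenMove (Ttup M₁ (w⁻¹ * (M j)⁻¹)) (Ttup M₁ (M j * w)) := by
    have h := move_inv_last M₁ (w⁻¹ * (M j)⁻¹)
    have e : (w⁻¹ * (M j)⁻¹)⁻¹ = M j * w := by group
    rwa [e] at h
  have hm5 : NielsenMove (Ttup M₁ (M j * w)) (Ttup M (M j * w)) := by
    have h := NielsenMove.inv (Ttup M₁ (M j * w)) j
    have e : Function.update (Ttup M₁ (M j * w)) j ((Ttup M₁ (M j * w)) j)⁻¹
        = Ttup M (M j * w) := by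
      have h1 : (Ttup M₁ (M j * w)) j = (M j)⁻¹ := by
        rw [Ttup, Function.update_of_ne hj, hM₁j]
      rw [h1, inv_inv, Ttup, Ttup, hM₁]
      rw [Function.update_comm (Ne.symm hj), Function.update_idem, Function.update_eq_self]
    rwa [e] at h
  exact Relation.ReflTransGen.head hm1 (Relation.ReflTransGen.head hm2
    (Relation.ReflTransGen.head hm3 (Relation.ReflTransGen.head hm4
      (Relation.ReflTransGen.single hm5))))

lemma nielsen_reach {M : Fin (m+1) → G} {u : G}
    (hu : u ∈ Subgroup.closure (Set.range fun i : Fin m => M i.castSucc))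
    {e : ℤ} (he : e = 1 ∨ e = -1) :
    NielsenEquiv M (Function.update M (Fin.last m) (u * M (Fin.last m) ^ e)) := by
  set K : Subgroup G :=
    { carrier := {g | ∀ w : G, NielsenEquiv M (Ttup M w) ↔ NielsenEquiv M (Ttup M (g * w))}
      one_mem' := by intro w; rw [one_mul]
      mul_mem' := by
        intro a b ha hb w
        rw [mul_assoc]
        exact (hb w).trans (ha (b * w))
      inv_mem' := by
        intro a ha w
        have h2 := ha (a⁻¹ * w)
        rw [mul_inv_cancel_left] at h2
        exact h2.symm } with hK
  have hgen : ∀ i : Fin m, M i.castSucc ∈ K := by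
    intro i
    intro w
    have hne : i.castSucc ≠ Fin.last m := (Fin.castSucc_lt_last i).ne
    constructor
    · intro hR
      exact hR.trans (chain_left_mul M w i.castSucc hne)
    · intro hR
      have h2 := hR.trans (chain_left_inv M (M i.castSucc * w) i.castSucc hne)
      rwa [inv_mul_cancel_left] at h2
  have hle : Subgroup.closure (Set.range fun i : Fin m => M i.castSucc) ≤ K := by
    rw [Subgroup.closure_le]
    rintro g ⟨i, rfl⟩
    exact hgen i
  have hbase : NielsenEquiv M (Ttup M (M (Fin.last m) ^ e)) := by
    rcases he with rfl | rfl
    · rw [zpow_one]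
      have h1 : Ttup M (M (Fin.last m)) = M := Function.update_eq_self _ _
      rw [h1]
      exact Relation.ReflTransGen.refl
    · rw [zpow_neg_one]
      have h1 : Ttup M (M (Fin.last m)) = M := Function.update_eq_self _ _
      have h2 := move_inv_last M (M (Fin.last m))
      rw [h1] at h2
      exact Relation.ReflTransGen.single h2
  exact (hle hu (M (Fin.last m) ^ e)).mp hbase

lemma min_numeric {G' X : Type*} [Group G'] [MetricSpace X] [MulAction G' X]
    {m' : ℕ} {x : X} {M : Fin (m'+1) → G'} (hmin : MinimalTuple x M) (v : G')
    (hv : NielsenEquiv M (Function.update M (Fin.last m') v)) :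
    dist x (M (Fin.last m') • x) ≤ dist x (v • x) + 1 := by
  have h := hmin _ hv
  have e1 : tupleLen x M =
      dist x (M (Fin.last m') • x) + ∑ i ∈ Finset.univ.erase (Fin.last m'),
        dist x (M i • x) := by
    rw [tupleLen]
    exact (Finset.add_sum_erase _ _ (Finset.mem_univ _)).symm
  have e2 : tupleLen x (Function.update M (Fin.last m') v) =
      dist x (v • x) + ∑ i ∈ Finset.univ.erase (Fin.last m'), dist x (M i • x) := by
    rw [tupleLen, ← Finset.add_sum_erase _ _ (Finset.mem_univ (Fin.last m'))]
    congr 1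
    · rw [Function.update_self]
    · apply Finset.sum_congr rfl
      intro i hi
      rw [Function.update_of_ne (Finset.mem_erase.1 hi).1]
  rw [e1, e2] at h
  linarith

end NielsenAux

/-- **Lemma 19(2).** Let `M = (g₁, …, gₙ)` (here `n = m+1`) be a minimal tuple of
isometries of a `1`-hyperbolic geodesic space with base point `x`, with
`|gᵢ|_x ≤ |gₙ|_x` for `i ≤ n-1`, let `H = ⟨g₁, …, g_{n-1}⟩` and suppose `d₂ ≥ 0` is
such that every geodesic `[x, hx]`, `h ∈ H`, lies in the
`max_{i<n} (|gᵢ|_x/2 + d₂)`-neighborhood of the orbit `Hx`. Then for every `h ∈ H` and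
`ε ∈ {-1,1}` there are a point `r` and geodesic segments `s₁ = [x,r]`,
`s₂ = [r, hgₙ^ε x]` such that `s₁ ∪ s₂` has length at most `|hgₙ^ε|_x + 2` and lies in
the `2`-neighborhood of any geodesic `[x, hgₙ^ε x]`, `s₁` lies in the `2`-neighborhood
of any `[x, hx]`, `s₂` lies in the `2`-neighborhood of any `h[x, gₙ^ε x]`, and
`d(r, x) ≥ |h|_x/2 - 3`, `d(r, hgₙ^ε x) ≥ |gₙ|_x/2 - (3 + d₂)`. -/
theorem lemma19_part2
    (G : Type*) [Group G] (X : Type*) [MetricSpace X] [MulAction G X]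
    (hgeo : GeodesicSpace X) (hhyp : DeltaHyperbolic X 1)
    (hiso : ∀ (g : G) (a b : X), dist (g • a) (g • b) = dist a b)
    (x : X) (m : ℕ) (M : Fin (m + 1) → G) (hmin : MinimalTuple x M)
    (hord : ∀ i : Fin m, dist x (M i.castSucc • x) ≤ dist x (M (Fin.last m) • x))
    (d₂ : ℝ) (hd₂ : 0 ≤ d₂)
    (hH : ∀ h ∈ Subgroup.closure (Set.range fun i : Fin m => M i.castSucc),
      ∀ S : Set X, IsGeodesicSegment S x (h • x) → ∀ p ∈ S,
        ∃ h' ∈ Subgroup.closure (Set.range fun i : Fin m => M i.castSucc), ∃ i : Fin m,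
          dist p (h' • x) ≤ dist x (M i.castSucc • x) / 2 + d₂)
    (h : G) (hh : h ∈ Subgroup.closure (Set.range fun i : Fin m => M i.castSucc))
    (e : ℤ) (he : e = 1 ∨ e = -1) :
    ∃ (r : X) (s₁ s₂ : Set X),
      IsGeodesicSegment s₁ x r ∧
      IsGeodesicSegment s₂ r ((h * M (Fin.last m) ^ e) • x) ∧
      dist x r + dist r ((h * M (Fin.last m) ^ e) • x) ≤
        dist x ((h * M (Fin.last m) ^ e) • x) + 2 ∧
      (∀ S : Set X, IsGeodesicSegment S x ((h * M (Fin.last m) ^ e) • x) →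
        InNbhd (s₁ ∪ s₂) S 2) ∧
      (∀ S : Set X, IsGeodesicSegment S x (h • x) → InNbhd s₁ S 2) ∧
      (∀ S : Set X, IsGeodesicSegment S (h • x) ((h * M (Fin.last m) ^ e) • x) →
        InNbhd s₂ S 2) ∧
      dist x (h • x) / 2 - 3 ≤ dist r x ∧
      dist x (M (Fin.last m) • x) / 2 - (3 + d₂) ≤
        dist r ((h * M (Fin.last m) ^ e) • x) := by
  classical
  set y : X := (h * M (Fin.last m) ^ e) • x with hy
  -- distance from h•x to y equals the displacement of the last generator
  have hxyB : dist (h • x) y = dist x (M (Fin.last m) • x) := by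
    have h1 : y = h • ((M (Fin.last m)) ^ e • x) := by rw [hy, mul_smul]
    rw [h1, hiso h]
    rcases he with rfl | rfl
    · rw [zpow_one]
    · rw [zpow_neg_one]
      have h2 := hiso (M (Fin.last m)) x ((M (Fin.last m))⁻¹ • x)
      rw [smul_inv_smul] at h2
      rw [← h2, dist_comm]
  -- a fixed geodesic from x to h•x
  obtain ⟨Sfix, hSfix⟩ := hgeo x (h • x)
  obtain ⟨f, hf0, hfL, hfiso, hfim⟩ := hSfix
  have hSfixgeo : IsGeodesicSegment Sfix x (h • x) := ⟨f, hf0, hfL, hfiso, hfim⟩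
  -- the set W of parameters whose point is 1-close to every geodesic [h•x, y]
  set A : ℝ := dist x (h • x) with hA
  set W : Set ℝ := {u | u ∈ Set.Icc 0 A ∧ ∀ T : Set X, IsGeodesicSegment T (h • x) y →
      Metric.infDist (f u) T ≤ 1} with hW
  have hAW : A ∈ W := by
    refine ⟨⟨dist_nonneg, le_refl A⟩, ?_⟩
    intro T hT
    have hfA : f A = h • x := hfL
    rw [hfA, Metric.infDist_zero_of_mem (geo_left_mem hT)]
    exact zero_le_one
  have hWne : W.Nonempty := ⟨A, hAW⟩
  have hWbd : BddBelow W := ⟨0, fun u hu => hu.1.1⟩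
  set P : ℝ := sInf W with hP
  have hP0 : 0 ≤ P := le_csInf hWne (fun u hu => hu.1.1)
  have hPA : P ≤ A := csInf_le hWbd hAW
  set r : X := f P with hr
  have hrmem : r ∈ Sfix := by rw [hfim]; exact ⟨P, ⟨hP0, hPA⟩, rfl⟩
  have hsInf : ∀ ε : ℝ, 0 < ε → ∃ u ∈ W, u < P + ε := by
    intro ε hε
    by_contra hcon
    push_neg at hcon
    have : P + ε ≤ P := le_csInf hWne hcon
    linarith
  -- r is 1-close to every geodesic [h•x, y]
  have hPW : ∀ T : Set X, IsGeodesicSegment T (h • x) y → Metric.infDist r T ≤ 1 := by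
    intro T hT
    refine le_of_forall_pos_le_add ?_
    intro ε hε
    obtain ⟨u, huW, hu⟩ := hsInf ε hε
    have hPu : P ≤ u := csInf_le hWbd huW
    obtain ⟨q, hqT, hq1⟩ := infDist_witness hT (huW.2 T hT)
    have hru : dist r (f u) = u - P := by
      rw [hr, hfiso P ⟨hP0, hPA⟩ u huW.1, abs_of_nonpos (by linarith), neg_sub]
    have h3 := Metric.infDist_le_dist_of_mem hqT (x := r)
    have h4 := dist_triangle r (f u) q
    rw [hru] at h4
    linarith
  -- every parameter strictly below P is 1-close to every geodesic [x, y]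
  have hcover : ∀ u : ℝ, u ∈ Set.Icc 0 A → u < P →
      ∀ S₀ : Set X, IsGeodesicSegment S₀ x y → Metric.infDist (f u) S₀ ≤ 1 := by
    intro u hu hultP S₀ hS₀
    by_contra hbad
    push_neg at hbad
    have huW : u ∈ W := by
      refine ⟨hu, ?_⟩
      intro T hT
      have hthin := hhyp x (h • x) y Sfix S₀ T hSfixgeo hS₀ hT
      have hfu : f u ∈ Sfix := by rw [hfim]; exact ⟨u, hu, rfl⟩
      obtain ⟨q, hq, hdq⟩ := hthin (f u) hfu
      rcases hq with hq | hq
      · exact absurd (le_trans (Metric.infDist_le_dist_of_mem hq) hdq) (not_le.mpr hbad)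
      · exact le_trans (Metric.infDist_le_dist_of_mem hq) hdq
    exact absurd (csInf_le hWbd huW) (not_le.mpr hultP)
  -- r is 1-close to every geodesic [x, y]
  have hPV : ∀ S₀ : Set X, IsGeodesicSegment S₀ x y → Metric.infDist r S₀ ≤ 1 := by
    intro S₀ hS₀
    rcases eq_or_lt_of_le hP0 with hP0' | hP0'
    · have hrx : r = x := by rw [hr, ← hP0', hf0]
      rw [hrx, Metric.infDist_zero_of_mem (geo_left_mem hS₀)]
      exact zero_le_one
    · refine le_of_forall_pos_le_add ?_
      intro ε hε
      set u : ℝ := max (P - ε) 0 with hu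
      have hu0 : 0 ≤ u := le_max_right _ _
      have huP : u < P := by
        rcases le_or_gt (P - ε) 0 with hc | hc
        · rw [hu, max_eq_right hc]; exact hP0'
        · rw [hu, max_eq_left hc.le]; linarith
      have huA : u ≤ A := le_trans huP.le hPA
      have hV := hcover u ⟨hu0, huA⟩ huP S₀ hS₀
      have hdru : dist r (f u) = P - u := by
        rw [hr, hfiso P ⟨hP0, hPA⟩ u ⟨hu0, huA⟩, abs_of_nonneg (by linarith [huP.le])]
      obtain ⟨q, hqS, hq1⟩ := infDist_witness hS₀ hV
      have h3 := Metric.infDist_le_dist_of_mem hqS (x := r)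
      have h4 := dist_triangle r (f u) q
      have h5 : P - u ≤ ε := by
        rcases le_or_gt (P - ε) 0 with hc | hc
        · rw [hu, max_eq_right hc]; linarith
        · rw [hu, max_eq_left hc.le]; linarith
      rw [hdru] at h4
      linarith
  -- choose the segments
  obtain ⟨s₁, hs₁⟩ := hgeo x r
  obtain ⟨s₂, hs₂⟩ := hgeo r y
  refine ⟨r, s₁, s₂, hs₁, hs₂, ?_, ?_, ?_, ?_, ?_, ?_⟩
  · -- length bound
    obtain ⟨S₀c, hS₀c⟩ := hgeo x y
    obtain ⟨z, hz, hz1⟩ := infDist_witness hS₀c (hPV S₀c hS₀c)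
    obtain ⟨f₀, h₀0, h₀L, h₀iso, h₀im⟩ := hS₀c
    rw [h₀im] at hz
    obtain ⟨t, ht, rfl⟩ := hz
    have hxz : dist x (f₀ t) = t := by
      rw [← h₀0, h₀iso 0 ⟨le_refl _, dist_nonneg⟩ t ht, zero_sub, abs_neg,
        abs_of_nonneg ht.1]
    have hzy : dist (f₀ t) y = dist x y - t := by
      have hh2 := h₀iso t ht (dist x y) ⟨dist_nonneg, le_refl _⟩
      rw [h₀L] at hh2
      rw [hh2, abs_of_nonpos (by linarith [ht.2] : t - dist x y ≤ 0), neg_sub]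
    have t1 := dist_triangle x (f₀ t) r
    have t2 := dist_triangle r (f₀ t) y
    have hcomm : dist (f₀ t) r = dist r (f₀ t) := dist_comm _ _
    linarith
  · -- union neighborhood
    intro S₀ hS₀
    obtain ⟨z, hzS, hz1⟩ := infDist_witness hS₀ (hPV S₀ hS₀)
    have hn1 : InNbhd s₁ S₀ 2 := nbhd_two hgeo hhyp hs₁ hS₀ hzS hz1
    have hn2 : InNbhd s₂ S₀ 2 :=
      nbhd_two hgeo hhyp (geo_symm hs₂) (geo_symm hS₀) hzS hz1
    intro p hp
    rcases hp with hp | hp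
    · exact hn1 p hp
    · exact hn2 p hp
  · -- s₁ close to every [x, h•x]
    intro S hS
    obtain ⟨q, hqS, hq1⟩ := close_geo hhyp hSfixgeo hS r hrmem
    exact nbhd_two hgeo hhyp hs₁ hS hqS hq1
  · -- s₂ close to every [h•x, y]
    intro T hT
    obtain ⟨q, hqT, hq1⟩ := infDist_witness hT (hPW T hT)
    exact nbhd_two hgeo hhyp (geo_symm hs₂) (geo_symm hT) hqT hq1
  · -- dist x (h•x)/2 - 3 ≤ dist r x
    obtain ⟨Tc, hTc⟩ := hgeo (h • x) y
    obtain ⟨q₂, hq₂, hq₂1⟩ := infDist_witness hTc (hPW Tc hTc)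
    obtain ⟨g, hg0, hgL, hgiso, hgim⟩ := hTc
    rw [hgim] at hq₂
    obtain ⟨s, hs, rfl⟩ := hq₂
    have h1 : dist (h • x) (g s) = s := by
      rw [← hg0, hgiso 0 ⟨le_refl _, dist_nonneg⟩ s hs, zero_sub, abs_neg,
        abs_of_nonneg hs.1]
    have h2 : dist (g s) y = dist (h • x) y - s := by
      have hh2 := hgiso s hs (dist (h • x) y) ⟨dist_nonneg, le_refl _⟩
      rw [hgL] at hh2
      rw [hh2, abs_of_nonpos (by linarith [hs.2] : s - dist (h • x) y ≤ 0), neg_sub]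
    have h1' : dist (g s) (h • x) = s := by rw [dist_comm]; exact h1
    have h3 := dist_triangle x (g s) (h • x)
    have h4 := dist_triangle x (g s) y
    have hn1 : dist x (M (Fin.last m) • x) ≤ dist x y + 1 := by
      have hne := nielsen_reach (M := M) hh he
      exact min_numeric hmin _ hne
    have h5 := dist_triangle x r (g s)
    have h6 : dist r x = dist x r := dist_comm _ _
    rw [hxyB] at h2
    linarith
  · -- dist r y bound
    obtain ⟨h', hh', i, hdi⟩ := hH h hh Sfix hSfixgeo r hrmem
    have hordi := hord i
    have hnum : dist x (M (Fin.last m) • x) ≤ dist (h' • x) y + 1 := by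
      have hmem : h'⁻¹ * h ∈ Subgroup.closure (Set.range fun i : Fin m => M i.castSucc) :=
        mul_mem (inv_mem hh') hh
      have hne := nielsen_reach (M := M) hmem he
      have hq := min_numeric hmin _ hne
      have heq : ((h'⁻¹ * h) * M (Fin.last m) ^ e) • x = h'⁻¹ • y := by
        rw [hy, mul_assoc, mul_smul]
      rw [heq] at hq
      have h2 := hiso h' x (h'⁻¹ • y)
      rw [smul_inv_smul] at h2
      rw [← h2] at hq
      exact hq
    have htri := dist_triangle (h' • x) r y
    have hd2 : dist r (h' • x) = dist (h' • x) r := dist_comm _ _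
    linarith
end

section
/- Let G be a group acting by isometries on a geodesic metric space (X,d), let g ∈ G, and let z ∈ X be a point with d(z, gz) ≤ ‖g‖ + 1 and N := d(z, gz) > 0. Fix a geodesic segment [z, gz]. Then the biinfinite concatenated path σ = ⋯ ∪ g⁻¹[z, gz] ∪ [z, gz] ∪ g[z, gz] ∪ g²[z, gz] ∪ ⋯, with its natural parameterization, is an N-local (1,2)-quasigeodesic. -/
set_option linter.unusedVariables false

/-- Let `g` act by isometries on a geodesic metric space `X`, let `z` be a point with
`d(z, gz) ≤ ‖g‖ + 1` and `N = d(z, gz) > 0`, and fix a geodesic `[z, gz]`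
(parameterized by `γ`). Then the biinfinite concatenated path
`σ = ⋯ ∪ g⁻¹[z,gz] ∪ [z,gz] ∪ g[z,gz] ∪ ⋯`, naturally parameterized by
`α (i·N + s) = gⁱ • γ s` for `i ∈ ℤ`, `s ∈ [0,N]`, is an `N`-local
`(1,2)`-quasigeodesic. -/
theorem biinfinite_local_quasigeodesic
    (G : Type*) [Group G] (X : Type*) [MetricSpace X] [MulAction G X]
    (hgeo : GeodesicSpace X)
    (hiso : ∀ (g : G) (a b : X), dist (g • a) (g • b) = dist a b)
    (g : G) (z : X)
    (hz : dist z (g • z) ≤ (⨅ y : X, dist y (g • y)) + 1)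
    (N : ℝ) (hN : N = dist z (g • z)) (hNpos : 0 < N)
    (γ : ℝ → X) (hγ0 : γ 0 = z) (hγN : γ N = g • z)
    (hγ : ∀ s ∈ Set.Icc (0 : ℝ) N, ∀ t ∈ Set.Icc (0 : ℝ) N, dist (γ s) (γ t) = |s - t|)
    (α : ℝ → X)
    (hα : ∀ i : ℤ, ∀ s ∈ Set.Icc (0 : ℝ) N, α (i * N + s) = g ^ i • γ s) :
    IsLocalQuasigeodesicOn α Set.univ N 1 2 := by
  
  have hNne : N ≠ 0 := ne_of_gt hNpos
  have hBdd : BddBelow (Set.range fun y : X => dist y (g • y)) :=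
    ⟨0, by rintro d ⟨y, rfl⟩; exact dist_nonneg⟩
  have hfr : ∀ r : ℝ, r - (⌊r/N⌋ : ℝ) * N = N * Int.fract (r/N) := by
    intro r
    rw [Int.fract]
    field_simp
  have ha0 : ∀ r : ℝ, 0 ≤ r - (⌊r/N⌋:ℝ) * N := by
    intro r; rw [hfr]; exact mul_nonneg hNpos.le (Int.fract_nonneg _)
  have haN : ∀ r : ℝ, r - (⌊r/N⌋:ℝ) * N < N := by
    intro r; rw [hfr]
    nlinarith [Int.fract_lt_one (r/N)]
  have hmem : ∀ r : ℝ, r - (⌊r/N⌋:ℝ)*N ∈ Set.Icc (0:ℝ) N := fun r => ⟨ha0 r, (haN r).le⟩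
  have hfl : ∀ r : ℝ, (⌊r/N⌋:ℝ)*N ≤ r := fun r => by have := ha0 r; linarith
  have hseg : ∀ (i : ℤ) (a b : ℝ), a ∈ Set.Icc (0:ℝ) N → b ∈ Set.Icc (0:ℝ) N →
      dist (α ((i:ℝ)*N+a)) (α ((i:ℝ)*N+b)) = |a - b| := by
    intro i a b ha hb
    rw [hα i a ha, hα i b hb, hiso, hγ a ha b hb]
  have hfloor_mono : ∀ s t : ℝ, s ≤ t → ⌊s/N⌋ ≤ ⌊t/N⌋ := by
    intro s t h; exact Int.floor_le_floor (by gcongr)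
  have lip : ∀ n : ℕ, ∀ s t : ℝ, s ≤ t → (⌊t/N⌋ - ⌊s/N⌋).toNat = n →
      dist (α s) (α t) ≤ t - s := by
    intro n
    induction n with
    | zero =>
      intro s t hst h0
      have hij : ⌊t/N⌋ = ⌊s/N⌋ := by
        have := hfloor_mono s t hst; omega
      have hmt : t - (⌊s/N⌋:ℝ)*N ∈ Set.Icc (0:ℝ) N := by
        have := hmem t; rw [hij] at this; exact this
      have h := hseg ⌊s/N⌋ (s - (⌊s/N⌋:ℝ)*N) (t - (⌊s/N⌋:ℝ)*N) (hmem s) hmt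
      rw [show (⌊s/N⌋:ℝ)*N + (s - (⌊s/N⌋:ℝ)*N) = s by ring,
        show (⌊s/N⌋:ℝ)*N + (t - (⌊s/N⌋:ℝ)*N) = t by ring,
        show (s - (⌊s/N⌋:ℝ)*N) - (t - (⌊s/N⌋:ℝ)*N) = s - t by ring] at h
      rw [h, abs_of_nonpos (by linarith)]
      linarith
    | succ n ih =>
      intro s t hst hn
      have hit : ⌊s/N⌋ + 1 ≤ ⌊t/N⌋ := by
        have := hfloor_mono s t hst; omega
      have hsm : s ≤ ((⌊s/N⌋:ℝ)+1)*N := by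
        have := haN s; nlinarith
      have hmt : ((⌊s/N⌋:ℝ)+1)*N ≤ t := by
        have h1 : ((⌊s/N⌋:ℤ)+1 : ℝ) * N ≤ (⌊t/N⌋:ℝ)*N := by
          have : ((⌊s/N⌋:ℤ)+1 : ℝ) ≤ (⌊t/N⌋:ℝ) := by exact_mod_cast hit
          nlinarith
        have h2 := hfl t
        push_cast at h1
        linarith
      have hfm : ⌊(((⌊s/N⌋:ℝ)+1)*N)/N⌋ = ⌊s/N⌋ + 1 := by
        rw [mul_div_assoc, div_self hNne, mul_one,
          show ((⌊s/N⌋:ℝ)+1) = ((⌊s/N⌋+1 : ℤ):ℝ) by push_cast; ring, Int.floor_intCast]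
      have d1 : dist (α s) (α (((⌊s/N⌋:ℝ)+1)*N)) ≤ ((⌊s/N⌋:ℝ)+1)*N - s := by
        have h := hseg ⌊s/N⌋ (s - (⌊s/N⌋:ℝ)*N) N (hmem s) ⟨hNpos.le, le_refl N⟩
        rw [show (⌊s/N⌋:ℝ)*N + (s - (⌊s/N⌋:ℝ)*N) = s by ring,
          show (⌊s/N⌋:ℝ)*N + N = ((⌊s/N⌋:ℝ)+1)*N by ring] at h
        rw [h, abs_of_nonpos (by nlinarith [haN s])]
        nlinarith
      have d2 : dist (α (((⌊s/N⌋:ℝ)+1)*N)) (α t) ≤ t - ((⌊s/N⌋:ℝ)+1)*N := by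
        apply ih _ t hmt
        rw [hfm]; omega
      calc dist (α s) (α t) ≤ dist (α s) (α (((⌊s/N⌋:ℝ)+1)*N))
            + dist (α (((⌊s/N⌋:ℝ)+1)*N)) (α t) := dist_triangle _ _ _
        _ ≤ t - s := by linarith
  have key : ∀ s t : ℝ, s ≤ t → t - s ≤ N → t - s ≤ dist (α s) (α t) + 2 := by
    intro s t hst hN'
    have hij : ⌊t/N⌋ = ⌊s/N⌋ ∨ ⌊t/N⌋ = ⌊s/N⌋ + 1 := by
      have h1 := hfloor_mono s t hst
      have h2 : t < (⌊s/N⌋:ℝ)*N + 2*N := by have := haN s; linarith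
      have h3 := hfl t
      have h4 : ⌊t/N⌋ < ⌊s/N⌋ + 2 := by
        by_contra h
        push_neg at h
        have hc : ((⌊s/N⌋:ℤ) + 2 : ℝ) ≤ (⌊t/N⌋:ℝ) := by exact_mod_cast h
        push_cast at hc
        nlinarith
      omega
    rcases hij with hij | hij
    · have hmt : t - (⌊s/N⌋:ℝ)*N ∈ Set.Icc (0:ℝ) N := by
        have := hmem t; rw [hij] at this; exact this
      have h := hseg ⌊s/N⌋ (s - (⌊s/N⌋:ℝ)*N) (t - (⌊s/N⌋:ℝ)*N) (hmem s) hmt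
      rw [show (⌊s/N⌋:ℝ)*N + (s - (⌊s/N⌋:ℝ)*N) = s by ring,
        show (⌊s/N⌋:ℝ)*N + (t - (⌊s/N⌋:ℝ)*N) = t by ring,
        show (s - (⌊s/N⌋:ℝ)*N) - (t - (⌊s/N⌋:ℝ)*N) = s - t by ring] at h
      rw [h, abs_of_nonpos (by linarith)] at *
      linarith
    · set a := s - (⌊s/N⌋:ℝ)*N with hadef
      set b := t - (⌊t/N⌋:ℝ)*N with hbdef
      have hαs : α s = g ^ ⌊s/N⌋ • γ a := by
        have h := hα ⌊s/N⌋ a (hmem s)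
        rw [show (⌊s/N⌋:ℝ)*N + a = s by rw [hadef]; ring] at h
        exact h
      have hαt : α t = g ^ ⌊t/N⌋ • γ b := by
        have h := hα ⌊t/N⌋ b (hmem t)
        rw [show (⌊t/N⌋:ℝ)*N + b = t by rw [hbdef]; ring] at h
        exact h
      have hzp : (g:G) ^ ⌊t/N⌋ = g ^ ⌊s/N⌋ * g := by rw [hij, zpow_add_one]
      have hD : dist (α s) (α t) = dist (γ a) (g • γ b) := by
        rw [hαs, hαt, hzp, mul_smul, hiso]
      have hinf : (⨅ y : X, dist y (g • y)) ≤ dist (γ a) (g • γ a) := ciInf_le hBdd _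
      have hNle : N ≤ dist (γ a) (g • γ a) + 1 := by rw [hN]; linarith
      have htri : dist (γ a) (g • γ a) ≤ dist (γ a) (g • γ b) + dist (g • γ b) (g • γ a) :=
        dist_triangle _ _ _
      have hc : (⌊t/N⌋:ℝ) = (⌊s/N⌋:ℝ) + 1 := by rw [hij]; push_cast; ring
      have hts : t - s = N + b - a := by rw [hadef, hbdef, hc]; ring
      have hba : b ≤ a := by linarith
      have hgb : dist (g • γ b) (g • γ a) = a - b := by
        rw [hiso, hγ b (hmem t) a (hmem s), abs_of_nonpos (by linarith)]
        ring
      rw [hD]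
      linarith
  constructor
  · intro s _ t _
    rcases le_total s t with h | h
    · rw [abs_of_nonpos (by linarith)]
      have := lip _ s t h rfl
      linarith
    · rw [abs_of_nonneg (by linarith), dist_comm]
      have := lip _ t s h rfl
      linarith
  · intro s _ t _ hle
    rcases le_total s t with h | h
    · rw [abs_of_nonpos (by linarith)] at hle ⊢
      have := key s t h (by linarith)
      linarith
    · rw [abs_of_nonneg (by linarith)] at hle ⊢
      rw [dist_comm]
      have := key t s h (by linarith)
      linarith
end

section
/- There exists a constant C > 0 with the following property. Let G be a group acting by isometries on a 1-hyperbolic geodesic metric space (X,d) with base point x ∈ X, and let g ∈ G. Then either ‖g‖ ≤ C, or g has infinite order, the cyclic subgroup ⟨g⟩ is free with free basis (g), and the map ℤ → X, k ↦ g^k x, is a quasi-isometric embedding. -/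
set_option linter.unusedVariables false

-- helpers
noncomputable def gp {X : Type*} [MetricSpace X] (w a b : X) : ℝ :=
  (dist w a + dist w b - dist a b) / 2

lemma gp_nonneg {X : Type*} [MetricSpace X] (w a b : X) : 0 ≤ gp w a b := by
  unfold gp
  have h := dist_triangle a w b
  rw [dist_comm a w] at h
  linarith

lemma seg_param {X : Type*} [MetricSpace X] {s : Set X} {a b : X}
    (hs : IsGeodesicSegment s a b) :
    ∃ f : ℝ → X, f 0 = a ∧ f (dist a b) = b ∧
      (∀ t ∈ Set.Icc (0:ℝ) (dist a b), dist a (f t) = t ∧ dist (f t) b = dist a b - t) ∧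
      (∀ t₁ ∈ Set.Icc (0:ℝ) (dist a b), ∀ t₂ ∈ Set.Icc (0:ℝ) (dist a b),
        dist (f t₁) (f t₂) = |t₁ - t₂|) ∧
      s = f '' Set.Icc (0:ℝ) (dist a b) := by
  obtain ⟨f, hf0, hfd, hfi, hfs⟩ := hs
  have h0 : (0:ℝ) ∈ Set.Icc (0:ℝ) (dist a b) := ⟨le_refl _, dist_nonneg⟩
  have hd : dist a b ∈ Set.Icc (0:ℝ) (dist a b) := ⟨dist_nonneg, le_refl _⟩
  refine ⟨f, hf0, hfd, ?_, hfi, hfs⟩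
  intro t ht
  constructor
  · rw [← hf0]
    rw [hfi 0 h0 t ht]
    rw [abs_of_nonpos (by linarith [ht.1])]
    ring
  · have h := hfi t ht (dist a b) hd
    rw [hfd] at h
    rw [h, abs_of_nonpos (by linarith [ht.2])]
    ring

lemma gp_le_of_mem_seg {X : Type*} [MetricSpace X] (w : X) {s : Set X} {a b : X}
    (hs : IsGeodesicSegment s a b) {q : X} (hq : q ∈ s) : gp w a b ≤ dist w q := by
  obtain ⟨f, hf0, hfd, hpt, hfi, hfs⟩ := seg_param hs
  rw [hfs] at hq
  obtain ⟨t, ht, rfl⟩ := hq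
  obtain ⟨h1, h2⟩ := hpt t ht
  unfold gp
  have t1 := dist_triangle w (f t) a
  have t2 := dist_triangle w (f t) b
  rw [dist_comm (f t) a] at t1
  linarith

lemma claimA_s14 {X : Type*} [MetricSpace X] (geo : GeodesicSpace X) (hyp : DeltaHyperbolic X 1)
    (w a b : X) {s : Set X} (hs : IsGeodesicSegment s a b) :
    ∃ p ∈ s, dist w p ≤ gp w a b + 2 := by
  obtain ⟨f, hf0, hfd, hpt, hfi, hfs⟩ := seg_param hs
  set t := gp a b w with htdef
  have ht : t ∈ Set.Icc (0:ℝ) (dist a b) := by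
    constructor
    · exact gp_nonneg a b w
    · rw [htdef]
      unfold gp
      have := dist_triangle a b w
      linarith
  have hp : f t ∈ s := by rw [hfs]; exact ⟨t, ht, rfl⟩
  obtain ⟨saw, hsaw⟩ := geo a w
  obtain ⟨sbw, hsbw⟩ := geo b w
  obtain ⟨q, hq, hpq⟩ := hyp a b w s saw sbw hs hsaw hsbw (f t) hp
  obtain ⟨hat, hbt⟩ := hpt t ht
  refine ⟨f t, hp, ?_⟩
  rcases hq with hq | hq
  · obtain ⟨f2, _, _, hpt2, _, hfs2⟩ := seg_param hsaw
    rw [hfs2] at hq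
    obtain ⟨u, hu, rfl⟩ := hq
    obtain ⟨hau, huw⟩ := hpt2 u hu
    have h1 : dist a (f t) ≤ dist a (f2 u) + dist (f2 u) (f t) := dist_triangle _ _ _
    have h2 : dist w (f t) ≤ dist w (f2 u) + dist (f2 u) (f t) := dist_triangle _ _ _
    rw [dist_comm (f2 u) (f t)] at h1 h2
    rw [dist_comm w (f2 u)] at h2
    unfold gp at htdef ⊢
    have e1 : dist a w = dist w a := dist_comm a w
    have e2 : dist b w = dist w b := dist_comm b w
    linarith
  · obtain ⟨f2, _, _, hpt2, _, hfs2⟩ := seg_param hsbw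
    rw [hfs2] at hq
    obtain ⟨u, hu, rfl⟩ := hq
    obtain ⟨hbu, huw⟩ := hpt2 u hu
    have h1 : dist b (f t) ≤ dist b (f2 u) + dist (f2 u) (f t) := dist_triangle _ _ _
    have h2 : dist w (f t) ≤ dist w (f2 u) + dist (f2 u) (f t) := dist_triangle _ _ _
    rw [dist_comm (f2 u) (f t)] at h1 h2
    rw [dist_comm w (f2 u)] at h2
    have e0 : dist (f t) b = dist b (f t) := dist_comm _ _
    have e1 : dist a w = dist w a := dist_comm a w
    have e2 : dist b w = dist w b := dist_comm b w
    unfold gp at htdef ⊢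
    linarith

lemma claimB {X : Type*} [MetricSpace X] (geo : GeodesicSpace X) (hyp : DeltaHyperbolic X 1)
    (w a b c : X) : min (gp w a c) (gp w c b) - 3 ≤ gp w a b := by
  obtain ⟨sab, hsab⟩ := geo a b
  obtain ⟨sac, hsac⟩ := geo a c
  obtain ⟨sbc, hsbc⟩ := geo b c
  obtain ⟨p, hp, hwp⟩ := claimA_s14 geo hyp w a b hsab
  obtain ⟨q, hq, hpq⟩ := hyp a b c sab sac sbc hsab hsac hsbc p hp
  have hwq : dist w q ≤ gp w a b + 3 := by
    have := dist_triangle w p q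
    linarith
  rcases hq with hq | hq
  · have := gp_le_of_mem_seg w hsac hq
    have hm := min_le_left (gp w a c) (gp w c b)
    linarith
  · have := gp_le_of_mem_seg w hsbc hq
    have hm := min_le_right (gp w a c) (gp w c b)
    have e : gp w c b = gp w b c := by unfold gp; rw [dist_comm c b]; ring
    linarith

lemma seg_smul {G X : Type*} [Group G] [MetricSpace X] [MulAction G X]
    (hiso : ∀ (g : G) (a b : X), dist (g • a) (g • b) = dist a b)
    {s : Set X} {a b : X} (hs : IsGeodesicSegment s a b) (g : G) :
    IsGeodesicSegment ((fun p => g • p) '' s) (g • a) (g • b) := by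
  obtain ⟨f, hf0, hfd, hfi, hfs⟩ := hs
  have hd : dist (g • a) (g • b) = dist a b := hiso g a b
  refine ⟨fun t => g • f t, by show g • f 0 = g • a; rw [hf0],
    by show g • f (dist (g • a) (g • b)) = g • b; rw [hd, hfd], ?_, ?_⟩
  · intro t₁ ht₁ t₂ ht₂
    rw [hd] at ht₁ ht₂
    rw [hiso g (f t₁) (f t₂)]
    exact hfi t₁ ht₁ t₂ ht₂
  · rw [hd, hfs, Set.image_image]

/-- Midpoint-type lemma: either some point is moved ≤ 11, or `d(y,g²y) ≥ d(y,gy)+7`. -/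
lemma lemM {G X : Type*} [Group G] [MetricSpace X] [MulAction G X]
    (geo : GeodesicSpace X) (hyp : DeltaHyperbolic X 1)
    (hiso : ∀ (g : G) (a b : X), dist (g • a) (g • b) = dist a b)
    (g : G) (y : X) (hL9 : 9 ≤ dist y (g • y)) :
    (∃ v : X, dist v (g • v) ≤ 11) ∨ dist y (g • y) + 7 ≤ dist y (g • g • y) := by
  obtain ⟨L, hLdef⟩ : ∃ r : ℝ, r = dist y (g • y) := ⟨_, rfl⟩
  rw [← hLdef] at hL9 ⊢
  obtain ⟨σ, hσ⟩ := geo y (g • y)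
  obtain ⟨f, hf0, hfd, hpt, hfi, hfs⟩ := seg_param hσ
  obtain ⟨τ, hτ⟩ := geo y (g • g • y)
  obtain ⟨D, hDdef⟩ : ∃ r : ℝ, r = dist y (g • g • y) := ⟨_, rfl⟩
  rw [← hDdef]
  obtain ⟨h, hh0, hhd, hhpt, hhi, hhs⟩ := seg_param hτ
  have hgσ : IsGeodesicSegment ((fun p => g • p) '' σ) (g • y) (g • g • y) := seg_smul hiso hσ g
  obtain ⟨t, htdef⟩ : ∃ r : ℝ, r = L / 2 + 9 / 2 := ⟨_, rfl⟩
  have ht : t ∈ Set.Icc (0:ℝ) (dist y (g • y)) := by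
    rw [← hLdef]
    exact ⟨by rw [htdef]; linarith, by rw [htdef]; linarith⟩
  have hp : f t ∈ σ := by rw [hfs]; exact ⟨t, ht, rfl⟩
  obtain ⟨q, hq, hpq⟩ := hyp y (g • y) (g • g • y) σ τ _ hσ hτ hgσ (f t) hp
  obtain ⟨hyt, htg⟩ := hpt t ht
  rcases hq with hq | hq
  · -- q on [y, g²y] : D is large
    right
    rw [hhs] at hq
    obtain ⟨u, hu, rfl⟩ := hq
    obtain ⟨hyu, hug⟩ := hhpt u hu
    -- dist y (h u) = u ≥ t - 1
    have h1 : dist y (f t) ≤ dist y (h u) + dist (h u) (f t) := dist_triangle _ _ _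
    -- dist (h u) g²y ≥ dist gy g²y - dist gy (h u) ≥ L - (L - t) - 1
    have hgyg2 : dist (g • y) (g • g • y) = L := by rw [hLdef]; exact hiso g y (g • y)
    have h2 : dist (g • y) (g • g • y) ≤ dist (g • y) (h u) + dist (h u) (g • g • y) :=
      dist_triangle _ _ _
    have h3 : dist (g • y) (h u) ≤ dist (g • y) (f t) + dist (f t) (h u) := dist_triangle _ _ _
    have e1 : dist (f t) (g • y) = dist (g • y) (f t) := dist_comm _ _
    have e2 : dist (h u) (f t) = dist (f t) (h u) := dist_comm _ _
    linarith
  · -- q on g•[y,gy] : small displacement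
    left
    obtain ⟨q', hq', rfl⟩ := hq
    rw [hfs] at hq'
    obtain ⟨u, hu, rfl⟩ := hq'
    -- dist (g•y) (g • f u) = u
    have hd1 : dist (g • y) (g • f u) = u := by
      rw [hiso g y (f u)]
      exact (hpt u hu).1
    -- |u - (L - t)| ≤ 1  via dist (g•y) (f t) = L - t
    have h3 : dist (g • y) (g • f u) ≤ dist (g • y) (f t) + dist (f t) (g • f u) :=
      dist_triangle _ _ _
    have h4 : dist (g • y) (f t) ≤ dist (g • y) (g • f u) + dist (g • f u) (f t) :=
      dist_triangle _ _ _
    have e1 : dist (f t) (g • y) = dist (g • y) (f t) := dist_comm _ _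
    have e2 : dist (g • f u) (f t) = dist (f t) (g • f u) := dist_comm _ _
    -- so u ≤ L - t + 1 and u ≥ L - t - 1
    have hu1 : u ≤ L - t + 1 := by linarith
    have hu2 : L - t - 1 ≤ u := by linarith
    obtain ⟨v, hvdef⟩ : ∃ r : ℝ, r = L - t := ⟨_, rfl⟩
    have hv : v ∈ Set.Icc (0:ℝ) (dist y (g • y)) := by
      rw [← hLdef]
      have ht1 : 0 ≤ t := by rw [htdef]; linarith
      exact ⟨by rw [hvdef, htdef]; linarith, by rw [hvdef]; linarith⟩
    refine ⟨f v, ?_⟩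
    have hfvv : dist (f v) (f t) = 9 := by
      rw [hfi v hv t ht]
      rw [abs_of_nonpos (by rw [hvdef, htdef]; linarith)]
      rw [hvdef, htdef]; ring
    have hguv : dist (g • f u) (g • f v) = |u - v| := by
      rw [hiso g (f u) (f v)]
      exact hfi u hu v hv
    have habs : |u - v| ≤ 1 := by
      rw [abs_le]; constructor <;> [skip; skip] <;> rw [hvdef] <;> linarith
    have t1 : dist (f v) (g • f v) ≤ dist (f v) (f t) + dist (f t) (g • f u) + dist (g • f u) (g • f v) := by
      calc dist (f v) (g • f v) ≤ dist (f v) (g • f u) + dist (g • f u) (g • f v) := dist_triangle _ _ _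
        _ ≤ dist (f v) (f t) + dist (f t) (g • f u) + dist (g • f u) (g • f v) := by
            linarith [dist_triangle (f v) (f t) (g • f u)]
    rw [hfvv, hguv] at t1
    linarith

/-- Chain lemma via the 4-point inequality. -/
lemma chainLem {X : Type*} [MetricSpace X]
    (h4 : ∀ w a b c : X, min (gp w a c) (gp w c b) - 3 ≤ gp w a b)
    (z : ℕ → X) (L c : ℝ) (hzd : ∀ n, dist (z n) (z (n + 1)) = L)
    (hgpc : ∀ n, gp (z (n + 1)) (z n) (z (n + 2)) ≤ c) (hk : 2 * c + 6 < L) :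
    ∀ n : ℕ, gp (z n) (z 0) (z (n + 1)) ≤ c + 3 ∧
      (n : ℝ) * L - 2 * n * (c + 3) + L ≤ dist (z 0) (z (n + 1)) := by
  have hc0 : 0 ≤ c := le_trans (gp_nonneg _ _ _) (hgpc 0)
  intro n
  induction n with
  | zero =>
    constructor
    · unfold gp
      simp only [dist_self]
      have := hzd 0
      rw [dist_comm (z 0) (z 1)] at this
      simp only [Nat.zero_add] at *
      linarith
    · simp only [Nat.cast_zero]
      rw [hzd 0]
      linarith
  | succ n ih =>
    obtain ⟨ih1, ih2⟩ := ih
    have key := h4 (z (n + 1)) (z n) (z (n + 2)) (z 0)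
    -- key : min (gp z(n+1) (z n) (z 0)) (gp z(n+1) (z 0) (z (n+2))) - 3 ≤ gp z(n+1) (z n) (z(n+2))
    have hcn := hgpc n
    have hmin : min (gp (z (n+1)) (z n) (z 0)) (gp (z (n+1)) (z 0) (z (n+2))) ≤ c + 3 := by
      linarith
    have hg1 : c + 3 < gp (z (n+1)) (z n) (z 0) := by
      unfold gp at ih1 ⊢
      have e1 : dist (z n) (z 0) = dist (z 0) (z n) := dist_comm _ _
      have e2 : dist (z (n+1)) (z 0) = dist (z 0) (z (n+1)) := dist_comm _ _
      have e3 : dist (z (n+1)) (z n) = dist (z n) (z (n+1)) := dist_comm _ _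
      rw [e1, e2, e3, hzd n]
      rw [hzd n] at ih1
      linarith
    have hg2 : gp (z (n+1)) (z 0) (z (n+2)) ≤ c + 3 := by
      rcases min_le_iff.mp hmin with h | h
      · linarith
      · exact h
    constructor
    · exact hg2
    · unfold gp at hg2
      have e2 : dist (z (n+1)) (z 0) = dist (z 0) (z (n+1)) := dist_comm _ _
      rw [e2, hzd (n+1)] at hg2
      push_cast
      linarith

lemma unit_zpow (w : FreeGroup Unit) : ∃ k : ℤ, w = (FreeGroup.of ()) ^ k := by
  refine FreeGroup.induction_on w ⟨0, (zpow_zero _).symm⟩ ?_ ?_ ?_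
  · intro x
    exact ⟨1, by cases x; rw [zpow_one]⟩
  · rintro x ⟨k, hk⟩
    exact ⟨-k, by rw [zpow_neg, ← hk]⟩
  · rintro u v ⟨k, hk⟩ ⟨j, hj⟩
    exact ⟨k + j, by rw [hk, hj, zpow_add]⟩

/-- There is a constant `C > 0` such that for any isometric action of a group `G` on a
`1`-hyperbolic geodesic space `X` with base point `x` and any `g ∈ G`, either
`‖g‖ ≤ C`, or `g` has infinite order, the cyclic subgroup `⟨g⟩` is free with free
basis `(g)`, and the map `ℤ → X`, `k ↦ g^k • x`, is a quasi-isometric embedding. -/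
theorem cyclic_short_or_quasiisometric :
    ∃ C : ℝ, 0 < C ∧
      ∀ (G : Type*) [Group G] (X : Type*) [MetricSpace X] [MulAction G X],
        GeodesicSpace X → DeltaHyperbolic X 1 →
        (∀ (g : G) (a b : X), dist (g • a) (g • b) = dist a b) →
        ∀ (x : X) (g : G),
          (⨅ y : X, dist y (g • y)) ≤ C ∨
          (¬ IsOfFinOrder g ∧
            Function.Injective ⇑(FreeGroup.lift (fun _ : Unit => g)) ∧
            ∃ lam eps : ℝ, 1 ≤ lam ∧ 0 ≤ eps ∧ ∀ k l : ℤ,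
              lam⁻¹ * |(k : ℝ) - (l : ℝ)| - eps ≤ dist ((g ^ k) • x) ((g ^ l) • x) ∧
              dist ((g ^ k) • x) ((g ^ l) • x) ≤ lam * |(k : ℝ) - (l : ℝ)| + eps) := by
  refine ⟨20, by norm_num, ?_⟩
  intro G _ X _ _ geo hyp hiso x g
  by_cases hC : (⨅ y : X, dist y (g • y)) ≤ 20
  · exact Or.inl hC
  push_neg at hC
  have hBdd : BddBelow (Set.range fun y : X => dist y (g • y)) :=
    ⟨0, by rintro r ⟨y, rfl⟩; exact dist_nonneg⟩
  have hlow : ∀ y : X, (20 : ℝ) < dist y (g • y) := fun y => lt_of_lt_of_le hC (ciInf_le hBdd y)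
  have hL20 : (20 : ℝ) < dist x (g • x) := hlow x
  -- d(x, g²x) is large
  have hD : dist x (g • x) + 7 ≤ dist x (g • g • x) := by
    rcases lemM geo hyp hiso g x (by linarith) with ⟨v, hv⟩ | h
    · exact absurd hv (by linarith [hlow v])
    · exact h
  -- the orbit chain
  have hzd : ∀ n : ℕ, dist ((g ^ n : G) • x) ((g ^ (n + 1) : G) • x) = dist x (g • x) := by
    intro n
    rw [pow_succ, mul_smul]
    exact hiso _ _ _
  have hz2 : ∀ n : ℕ, dist ((g ^ n : G) • x) ((g ^ (n + 2) : G) • x) = dist x (g • g • x) := by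
    intro n
    have h2 : (g ^ (n + 2) : G) • x = g ^ n • g • g • x := by
      rw [pow_add, mul_smul, pow_two, mul_smul]
    rw [h2]
    exact hiso _ _ _
  have hgpc : ∀ n : ℕ, gp ((g ^ (n + 1) : G) • x) ((g ^ n : G) • x) ((g ^ (n + 2) : G) • x)
      ≤ (dist x (g • x) - 7) / 2 := by
    intro n
    unfold gp
    have e1 : dist ((g ^ (n + 1) : G) • x) ((g ^ n : G) • x)
        = dist ((g ^ n : G) • x) ((g ^ (n + 1) : G) • x) := dist_comm _ _
    rw [e1, hzd n, hzd (n + 1), hz2 n]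
    linarith
  have hchain := chainLem (claimB geo hyp) (fun n : ℕ => (g ^ n : G) • x)
    (dist x (g • x)) ((dist x (g • x) - 7) / 2) hzd hgpc (by linarith)
  have hx0 : (g ^ (0 : ℕ) : G) • x = x := by rw [pow_zero, one_smul]
  have hlower : ∀ n : ℕ, (n : ℝ) ≤ dist x ((g ^ n : G) • x) := by
    intro n
    cases n with
    | zero => simp [hx0]
    | succ m =>
      have := (hchain m).2
      simp only [hx0] at this
      push_cast
      linarith
  have hupper : ∀ n : ℕ, dist x ((g ^ n : G) • x) ≤ (n : ℝ) * dist x (g • x) := by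
    intro n
    induction n with
    | zero => simp [hx0]
    | succ m ih =>
      have h1 := dist_triangle x ((g ^ m : G) • x) ((g ^ (m + 1) : G) • x)
      rw [hzd m] at h1
      push_cast
      linarith
  have habs : ∀ m : ℤ, dist x ((g ^ m : G) • x) = dist x ((g ^ m.natAbs : G) • x) := by
    intro m
    rcases Int.natAbs_eq m with h | h
    · conv_lhs => rw [h]
      rw [zpow_natCast]
    · conv_lhs => rw [h]
      rw [zpow_neg, zpow_natCast]
      have h2 := hiso (g ^ m.natAbs) x ((g ^ m.natAbs)⁻¹ • x)
      rw [smul_inv_smul] at h2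
      rw [← h2, dist_comm]
  have key : ∀ k l : ℤ, dist ((g ^ k) • x) ((g ^ l) • x)
      = dist x ((g ^ (l - k).natAbs : G) • x) := by
    intro k l
    have h1 : (g ^ l : G) = g ^ k * g ^ (l - k) := by rw [← zpow_add]; congr 1; ring
    rw [h1, mul_smul, hiso (g ^ k) x ((g ^ (l - k) : G) • x)]
    exact habs _
  have hzinj : ∀ k j : ℤ, (g : G) ^ k = g ^ j → k = j := by
    intro k j hkj
    by_contra hne
    have hn1 : 1 ≤ (k - j).natAbs := Int.natAbs_pos.mpr (sub_ne_zero.mpr hne)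
    have hkey := key j k
    rw [hkj] at hkey
    rw [dist_self] at hkey
    have hge := hlower ((k - j).natAbs)
    rw [← hkey] at hge
    have h1 : (1 : ℝ) ≤ ((k - j).natAbs : ℝ) := by exact_mod_cast hn1
    linarith
  refine Or.inr ⟨?_, ?_, dist x (g • x), 0, by linarith, le_refl 0, ?_⟩
  · intro hfo
    obtain ⟨n, hn, hgn⟩ := isOfFinOrder_iff_pow_eq_one.mp hfo
    have := hlower n
    rw [hgn, one_smul, dist_self] at this
    have h1 : (1 : ℝ) ≤ (n : ℝ) := by exact_mod_cast hn
    linarith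
  · intro w v hwv
    obtain ⟨kw, rfl⟩ := unit_zpow w
    obtain ⟨kv, rfl⟩ := unit_zpow v
    have h1 : (FreeGroup.lift fun _ : Unit => g) (FreeGroup.of () ^ kw) = g ^ kw := by
      rw [map_zpow, FreeGroup.lift_apply_of]
    have h2 : (FreeGroup.lift fun _ : Unit => g) (FreeGroup.of () ^ kv) = g ^ kv := by
      rw [map_zpow, FreeGroup.lift_apply_of]
    rw [h1, h2] at hwv
    rw [hzinj kw kv hwv]
  · intro k l
    have hcast : |(k : ℝ) - (l : ℝ)| = (((l - k).natAbs : ℕ) : ℝ) := by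
      rw [Nat.cast_natAbs]
      push_cast
      rw [abs_sub_comm]
    have hLpos : (0 : ℝ) < dist x (g • x) := by linarith
    have hinv : (dist x (g • x))⁻¹ ≤ 1 := by
      rw [inv_le_one_iff₀]
      right; linarith
    constructor
    · rw [key k l, hcast]
      have hn := hlower ((l - k).natAbs)
      have hnn : (0 : ℝ) ≤ (((l - k).natAbs : ℕ) : ℝ) := Nat.cast_nonneg _
      nlinarith
    · rw [key k l, hcast]
      have hn := hupper ((l - k).natAbs)
      linarith
end
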